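/- arXiv:1808.10671 — 4 statements merged into one kernel-verified Lean document; each statement's English description precedes it below -/
import Mathlib

section
/- Assume μ ≠ δ_{2/3} and let x ∈ M₁₂ \ {C, c}. Then P(lim_{n→∞} φ_n(x,·) = C) > 0 if and only if E log(1/3 + Θ) < 0, and P(lim_{n→∞} φ_n(x,·) = c) > 0 if and only if E log(2 − (3/2)Θ) < 0. (Theorem 2.2 b.) -/
open MeasureTheory ProbabilityTheory Filter Topology
open scoped ENNReal

noncomputable section

/-- The cubic stochastic operator `V_θ`, regarded as a map on (Euclidean) `ℝ³`. -/
def Vcso (θ : ℝ) (x : EuclideanSpace ℝ (Fin 3)) : EuclideanSpace ℝ (Fin 3) :=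
  !₂[x 0 * ((x 0)^2 + 3*θ*(x 0)*(x 1 + x 2) + 3*(1-θ)*((x 1)^2 + (x 2)^2) + 2*(x 1)*(x 2)),
    x 1 * ((x 1)^2 + 3*θ*(x 1)*(x 2 + x 0) + 3*(1-θ)*((x 2)^2 + (x 0)^2) + 2*(x 2)*(x 0)),
    x 2 * ((x 2)^2 + 3*θ*(x 2)*(x 0 + x 1) + 3*(1-θ)*((x 0)^2 + (x 1)^2) + 2*(x 0)*(x 1))]

/-- The simplex `Δ² = {x ∈ ℝ³ : x₁,x₂,x₃ ≥ 0, x₁+x₂+x₃ = 1}`. -/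
def simplex2 : Set (EuclideanSpace ℝ (Fin 3)) :=
  {x | 0 ≤ x 0 ∧ 0 ≤ x 1 ∧ 0 ≤ x 2 ∧ x 0 + x 1 + x 2 = 1}

/-- The random orbit `φ_n(x) = V_{θ_n} ∘ ⋯ ∘ V_{θ_1}(x)` driven by the sequence
`θ_1, θ_2, … = θs 0, θs 1, …`. -/
def phiRDS (θs : ℕ → ℝ) : ℕ → EuclideanSpace ℝ (Fin 3) → EuclideanSpace ℝ (Fin 3)
  | 0, x => x
  | n+1, x => Vcso (θs n) (phiRDS θs n x)

/-- The vertex `e₁ = (1,0,0)`. -/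
def e1 : EuclideanSpace ℝ (Fin 3) := !₂[1, 0, 0]

/-- The vertex `c = (1/2,1/2,0)`. -/
def cpt : EuclideanSpace ℝ (Fin 3) := !₂[1/2, 1/2, 0]

/-- The vertex `C = (1/3,1/3,1/3)`. -/
def Cpt : EuclideanSpace ℝ (Fin 3) := !₂[1/3, 1/3, 1/3]

/-- `G₁ = {y ∈ Δ² : y₁ ≥ y₂ ≥ y₃}`. -/
def G1 : Set (EuclideanSpace ℝ (Fin 3)) :=
  {y ∈ simplex2 | y 0 ≥ y 1 ∧ y 1 ≥ y 2}

/-- The interior of `G₁`: `{y ∈ Δ² : y₁ > y₂ > y₃ > 0}`. -/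
def intG1 : Set (EuclideanSpace ℝ (Fin 3)) :=
  {y ∈ simplex2 | y 0 > y 1 ∧ y 1 > y 2 ∧ y 2 > 0}

/-- The edge `M₁₂ = {y ∈ Δ² : y₁ = y₂ ≥ y₃}`. -/
def M12 : Set (EuclideanSpace ℝ (Fin 3)) :=
  {y ∈ simplex2 | y 0 = y 1 ∧ y 1 ≥ y 2}

/-- The edge `M₂₃ = {y ∈ Δ² : y₁ ≥ y₂ = y₃}`. -/
def M23 : Set (EuclideanSpace ℝ (Fin 3)) :=
  {y ∈ simplex2 | y 0 ≥ y 1 ∧ y 1 = y 2}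

/-- The edge `Γ₁₂ = {y ∈ Δ² : y₁ ≥ y₂, y₃ = 0}`. -/
def Gamma12 : Set (EuclideanSpace ℝ (Fin 3)) :=
  {y ∈ simplex2 | y 0 ≥ y 1 ∧ y 2 = 0}

/-- The seven fixed points `𝒜`. -/
def fixedA : Set (EuclideanSpace ℝ (Fin 3)) :=
  {!₂[1,0,0], !₂[0,1,0], !₂[0,0,1], !₂[1/2,1/2,0], !₂[1/2,0,1/2], !₂[0,1/2,1/2], !₂[1/3,1/3,1/3]}

/-- Positive part of `log t`, valued in `ℝ≥0∞`. -/
def logPos (t : ℝ) : ℝ≥0∞ := ENNReal.ofReal (Real.log t)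

/-- Negative part of the extended logarithm (with `log 0 = -∞`), valued in `ℝ≥0∞`. -/
def logNeg (t : ℝ) : ℝ≥0∞ := if t ≤ 0 then ⊤ else ENNReal.ofReal (-Real.log t)

/-- `E log g(Θ) < 0` in the extended sense (the value `-∞` is allowed), where `Θ` has law `μ`:
the positive part of the extended expectation is strictly smaller than the negative part. -/
def expLogNeg (μ : Measure ℝ) (g : ℝ → ℝ) : Prop :=
  ∫⁻ θ, logPos (g θ) ∂μ < ∫⁻ θ, logNeg (g θ) ∂μ

/-- `E log g(Θ) ≤ r` in the extended sense (the value `-∞` is allowed), where `Θ` has law `μ`. -/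
def expLogLe (μ : Measure ℝ) (g : ℝ → ℝ) (r : ℝ) : Prop :=
  ∫⁻ θ, logPos (g θ) ∂μ + ENNReal.ofReal (-r) ≤ ∫⁻ θ, logNeg (g θ) ∂μ + ENNReal.ofReal r

/-- The topological support of a measure on `ℝ`: points all of whose open neighborhoods
have positive measure. -/
def measSupport (μ : Measure ℝ) : Set ℝ :=
  {t : ℝ | ∀ U : Set ℝ, IsOpen U → t ∈ U → 0 < μ U}

namespace AttractorAux

def clamp01 (t : ℝ) : ℝ := max 0 (min 1 t)

lemma clamp01_mem (t : ℝ) : clamp01 t ∈ Set.Icc (0:ℝ) 1 := by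
  unfold clamp01
  constructor
  · exact le_max_left _ _
  · rcases le_total t 1 with h | h
    · rw [min_eq_right h]
      exact max_le (by norm_num) h
    · rw [min_eq_left h]
      norm_num

lemma clamp01_eq {t : ℝ} (h : t ∈ Set.Icc (0:ℝ) 1) : clamp01 t = t := by
  rcases h with ⟨h0, h1⟩
  simp [clamp01, min_eq_right h1, max_eq_right h0]

lemma measurable_clamp01 : Measurable clamp01 :=
  measurable_const.max (measurable_const.min measurable_id)

/-- one-step multiplicative ratio of the abstract interval dynamics -/
def rat (g σ : ℝ → ℝ) (θ y : ℝ) : ℝ := 1 - σ y + σ y * g θ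

structure GoodPair (g σ : ℝ → ℝ) : Prop where
  gmeas : Measurable g
  smeas : Measurable σ
  glb : ∀ θ ∈ Set.Icc (0:ℝ) 1, (1/3:ℝ) ≤ g θ
  gub : ∀ θ ∈ Set.Icc (0:ℝ) 1, g θ ≤ 2
  snn : ∀ y ∈ Set.Icc (0:ℝ) (1/3:ℝ), 0 ≤ σ y
  sle : ∀ y ∈ Set.Icc (0:ℝ) (1/3:ℝ), σ y ≤ 1
  sbound : ∀ y ∈ Set.Icc (0:ℝ) (1/3:ℝ), 1 - σ y ≤ 4 * y
  santi : ∀ y y', 0 ≤ y → y ≤ y' → y' ≤ 1/3 → σ y' ≤ σ y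
  spos : ∀ y, 0 ≤ y → y < 1/3 → 0 < σ y
  inv : ∀ θ ∈ Set.Icc (0:ℝ) 1, ∀ y ∈ Set.Ioc (0:ℝ) (1/3:ℝ),
      y * rat g σ θ y ∈ Set.Ioc (0:ℝ) (1/3:ℝ)

namespace GoodPair

variable {g σ : ℝ → ℝ} {θ y : ℝ}

lemma rat_ge (hp : GoodPair g σ) (hθ : θ ∈ Set.Icc (0:ℝ) 1) (hy : y ∈ Set.Icc (0:ℝ) (1/3:ℝ)) :
    (1/3 : ℝ) ≤ rat g σ θ y := by
  have h1 := hp.glb θ hθ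
  have h2 := hp.snn y hy
  have h3 := hp.sle y hy
  unfold rat; nlinarith

lemma rat_le (hp : GoodPair g σ) (hθ : θ ∈ Set.Icc (0:ℝ) 1) (hy : y ∈ Set.Icc (0:ℝ) (1/3:ℝ)) :
    rat g σ θ y ≤ 2 := by
  have h1 := hp.gub θ hθ
  have h2 := hp.snn y hy
  have h3 := hp.sle y hy
  unfold rat; nlinarith

lemma rat_pos (hp : GoodPair g σ) (hθ : θ ∈ Set.Icc (0:ℝ) 1) (hy : y ∈ Set.Icc (0:ℝ) (1/3:ℝ)) :
    0 < rat g σ θ y := lt_of_lt_of_le (by norm_num) (hp.rat_ge hθ hy)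

lemma abs_log_rat_le (hp : GoodPair g σ) (hθ : θ ∈ Set.Icc (0:ℝ) 1) (hy : y ∈ Set.Icc (0:ℝ) (1/3:ℝ)) :
    |Real.log (rat g σ θ y)| ≤ Real.log 3 := by
  rw [abs_le]
  constructor
  · have : Real.log (1/3) ≤ Real.log (rat g σ θ y) :=
      Real.log_le_log (by norm_num) (hp.rat_ge hθ hy)
    have h13 : Real.log (1/3 : ℝ) = - Real.log 3 := by
      rw [Real.log_div one_ne_zero (by norm_num), Real.log_one]; ring
    linarith [h13 ▸ this]
  · calc Real.log (rat g σ θ y) ≤ Real.log 2 :=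
          Real.log_le_log (hp.rat_pos hθ hy) (hp.rat_le hθ hy)
    _ ≤ Real.log 3 := Real.log_le_log (by norm_num) (by norm_num)

/-- The key concavity estimate: `log r ≥ σ(y) log g(θ)`. -/
lemma log_rat_ge (hp : GoodPair g σ) (hθ : θ ∈ Set.Icc (0:ℝ) 1) (hy : y ∈ Set.Icc (0:ℝ) (1/3:ℝ)) :
    σ y * Real.log (g θ) ≤ Real.log (rat g σ θ y) := by
  have hgpos : 0 < g θ := lt_of_lt_of_le (by norm_num) (hp.glb θ hθ)
  have hs0 := hp.snn y hy
  have hs1 := hp.sle y hy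
  have hgm : g θ ^ (σ y) ≤ rat g σ θ y := by
    have := Real.geom_mean_le_arith_mean2_weighted (by linarith : (0:ℝ) ≤ 1 - σ y)
      hs0 zero_le_one hgpos.le (by ring)
    simpa [rat, Real.one_rpow] using this
  calc σ y * Real.log (g θ) = Real.log (g θ ^ (σ y)) := (Real.log_rpow hgpos _).symm
  _ ≤ Real.log (rat g σ θ y) := Real.log_le_log (Real.rpow_pos_of_pos hgpos _) hgm

lemma rat_le_exp (hp : GoodPair g σ) (hθ : θ ∈ Set.Icc (0:ℝ) 1) (hy : y ∈ Set.Icc (0:ℝ) (1/3:ℝ)) :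
    rat g σ θ y ≤ g θ * Real.exp (12 * y) := by
  have h1 := hp.glb θ hθ
  have h2 := hp.snn y hy
  have h3 := hp.sle y hy
  have h4 := hp.sbound y hy
  have hy0 : 0 ≤ y := hy.1
  have step1 : rat g σ θ y ≤ g θ * (1 + 12 * y) := by
    have hdiff : rat g σ θ y - g θ = (1 - σ y) * (1 - g θ) := by unfold rat; ring
    have hb : (1 - σ y) * (1 - g θ) ≤ 4 * y := by
      rcases le_total (g θ) 1 with h | h
      · calc (1 - σ y) * (1 - g θ) ≤ (4 * y) * (1 - g θ) := by nlinarith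
        _ ≤ 4 * y := by nlinarith
      · nlinarith
    nlinarith
  calc rat g σ θ y ≤ g θ * (1 + 12 * y) := step1
  _ ≤ g θ * Real.exp (12 * y) := by
      have := Real.add_one_le_exp (12 * y)
      nlinarith

lemma rat_contract (hp : GoodPair g σ) {η y₀ : ℝ} (hη : 0 ≤ η) (hgθ : g θ ≤ 1 - η)
    (hy0 : 0 ≤ y) (hyy : y ≤ y₀) (hy₀ : y₀ ≤ 1/3) :
    rat g σ θ y ≤ 1 - σ y₀ * η := by
  have hyI : y ∈ Set.Icc (0:ℝ) (1/3:ℝ) := ⟨hy0, le_trans hyy hy₀⟩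
  have h2 := hp.snn y hyI
  have hmono := hp.santi y y₀ hy0 hyy hy₀
  have : rat g σ θ y = 1 - σ y * (1 - g θ) := by unfold rat; ring
  rw [this]
  nlinarith

end GoodPair

/-! ### the concrete systems -/

def gc (θ : ℝ) : ℝ := 2 - 3/2 * θ
def gC (θ : ℝ) : ℝ := 1/3 + θ
def sc (y : ℝ) : ℝ := (1 - 3*y) * (1 - y)
def sC (y : ℝ) : ℝ := (9/2) * ((1/3 - y) * (2/3 + y))

def Fc (θ z : ℝ) : ℝ := z * rat gc sc θ z

lemma key_identity (θ z : ℝ) : 1/3 - Fc θ z = (1/3 - z) * rat gC sC θ (1/3 - z) := by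
  unfold Fc rat gc gC sc sC; ring

lemma gp_c : GoodPair gc sc := by
  refine ⟨?_, ?_, ?_, ?_, ?_, ?_, ?_, ?_, ?_, ?_⟩
  · unfold gc; fun_prop
  · unfold sc; fun_prop
  · rintro θ ⟨h0, h1⟩; unfold gc; linarith
  · rintro θ ⟨h0, h1⟩; unfold gc; linarith
  · rintro y ⟨h0, h1⟩; unfold sc; nlinarith
  · rintro y ⟨h0, h1⟩; unfold sc; nlinarith
  · rintro y ⟨h0, h1⟩; unfold sc; nlinarith
  · rintro y y' h0 h1 h2; unfold sc; nlinarith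
  · rintro y h0 h1; unfold sc; nlinarith
  · rintro θ ⟨ht0, ht1⟩ y ⟨hy0, hy1⟩
    constructor
    · have hs0 : (0:ℝ) ≤ (1 - 3*y) * (1 - y) := by nlinarith
      have hs1 : (1 - 3*y) * (1 - y) ≤ 1 := by nlinarith
      have hprod : 0 ≤ ((1 - 3*y) * (1 - y)) * (2 - 3/2*θ - 1/2) :=
        mul_nonneg hs0 (by linarith)
      have : (0:ℝ) < rat gc sc θ y := by
        unfold rat gc sc; nlinarith
      exact mul_pos hy0 this
    · have h := key_identity θ y
      have hnn : 0 ≤ rat gC sC θ (1/3 - y) := by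
        have hs0 : (0:ℝ) ≤ (9/2) * ((1/3 - (1/3 - y)) * (2/3 + (1/3 - y))) := by nlinarith
        have hs1 : (9/2) * ((1/3 - (1/3 - y)) * (2/3 + (1/3 - y))) ≤ 1 := by nlinarith
        have hprod : 0 ≤ ((9/2) * ((1/3 - (1/3 - y)) * (2/3 + (1/3 - y)))) * (1/3 + θ - 1/3) :=
          mul_nonneg hs0 (by linarith)
        unfold rat gC sC; nlinarith
      have : 0 ≤ 1/3 - y * rat gc sc θ y := by
        have := mul_nonneg (by linarith : (0:ℝ) ≤ 1/3 - y) hnn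
        unfold Fc at h; linarith
      linarith

lemma gp_C : GoodPair gC sC := by
  refine ⟨?_, ?_, ?_, ?_, ?_, ?_, ?_, ?_, ?_, ?_⟩
  · unfold gC; fun_prop
  · unfold sC; fun_prop
  · rintro θ ⟨h0, h1⟩; unfold gC; linarith
  · rintro θ ⟨h0, h1⟩; unfold gC; linarith
  · rintro y ⟨h0, h1⟩; unfold sC; nlinarith
  · rintro y ⟨h0, h1⟩; unfold sC; nlinarith
  · rintro y ⟨h0, h1⟩; unfold sC; nlinarith
  · rintro y y' h0 h1 h2; unfold sC; nlinarith
  · rintro y h0 h1; unfold sC; nlinarith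
  · rintro θ ⟨ht0, ht1⟩ y ⟨hy0, hy1⟩
    constructor
    · have hs0 : (0:ℝ) ≤ (9/2) * ((1/3 - y) * (2/3 + y)) := by nlinarith
      have hs1 : (9/2) * ((1/3 - y) * (2/3 + y)) ≤ 1 := by nlinarith
      have hprod : 0 ≤ ((9/2) * ((1/3 - y) * (2/3 + y))) * (1/3 + θ - 1/3) :=
        mul_nonneg hs0 (by linarith)
      have : (0:ℝ) < rat gC sC θ y := by
        unfold rat gC sC; nlinarith
      exact mul_pos hy0 this
    · have h := key_identity θ (1/3 - y)
      have : (1/3 : ℝ) - (1/3 - y) = y := by ring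
      rw [this] at h
      have hnn : 0 ≤ Fc θ (1/3 - y) := by
        unfold Fc
        have hs0 : (0:ℝ) ≤ (1 - 3*(1/3 - y)) * (1 - (1/3 - y)) := by nlinarith
        have hs1 : (1 - 3*(1/3 - y)) * (1 - (1/3 - y)) ≤ 1 := by nlinarith
        have hprod : 0 ≤ ((1 - 3*(1/3 - y)) * (1 - (1/3 - y))) * (2 - 3/2*θ - 1/2) :=
          mul_nonneg hs0 (by linarith)
        have : (0:ℝ) ≤ rat gc sc θ (1/3 - y) := by
          unfold rat gc sc; nlinarith
        nlinarith
      linarith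


/-! ### connection with the concrete 3-d system -/

def pt (z : ℝ) : EuclideanSpace ℝ (Fin 3) := !₂[(1-z)/2, (1-z)/2, z]

lemma pt_apply0 (z : ℝ) : pt z 0 = (1-z)/2 := rfl
lemma pt_apply1 (z : ℝ) : pt z 1 = (1-z)/2 := rfl
lemma pt_apply2 (z : ℝ) : pt z 2 = z := rfl

lemma Vcso_pt (θ z : ℝ) : Vcso θ (pt z) = pt (Fc θ z) := by
  ext i
  fin_cases i <;>
    simp only [Vcso, pt, PiLp.toLp_apply, Fin.zero_eta, Fin.mk_one, Fin.isValue, Matrix.cons_val_zero,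
      Matrix.cons_val_one, Matrix.head_cons, Matrix.cons_val_two, Matrix.tail_cons] <;>
    (unfold Fc rat gc sc; ring)

/-- the orbit of the induced interval dynamics -/
def orb (z₀ : ℝ) (θs : ℕ → ℝ) : ℕ → ℝ
  | 0 => z₀
  | n+1 => Fc (θs n) (orb z₀ θs n)

lemma phiRDS_pt (z₀ : ℝ) (θs : ℕ → ℝ) (n : ℕ) :
    phiRDS θs n (pt z₀) = pt (orb z₀ θs n) := by
  induction n with
  | zero => rfl
  | succ n ih => rw [phiRDS, ih, Vcso_pt]; rfl

lemma continuous_pt : Continuous pt := by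
  have : Continuous fun z : ℝ => (![(1-z)/2, (1-z)/2, z] : Fin 3 → ℝ) := by
    apply continuous_pi
    intro i
    fin_cases i <;> simp <;> fun_prop
  exact (PiLp.continuous_toLp (p := 2) (β := fun _ : Fin 3 => ℝ)).comp this

lemma tendsto_pt_iff {u : ℕ → ℝ} {l : ℝ} :
    Tendsto (fun n => pt (u n)) atTop (𝓝 (pt l)) ↔ Tendsto u atTop (𝓝 l) := by
  constructor
  · intro h
    have h2 := ((PiLp.continuous_ofLp (p := 2) (β := fun _ : Fin 3 => ℝ)).tendsto (pt l)).comp h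
    have h3 := ((continuous_apply (2 : Fin 3)).tendsto _).comp h2
    exact h3
  · intro h
    exact (continuous_pt.tendsto l).comp h

lemma cpt_eq : cpt = pt 0 := by
  ext i; fin_cases i <;> simp [cpt, pt] <;> norm_num

lemma Cpt_eq : Cpt = pt (1/3) := by
  ext i; fin_cases i <;> simp [Cpt, pt] <;> norm_num

/-- identification of the starting point -/
lemma x_eq_pt {x : EuclideanSpace ℝ (Fin 3)} (hx : x ∈ M12) (hxC : x ≠ Cpt) (hxc : x ≠ cpt) :
    x = pt (x 2) ∧ 0 < x 2 ∧ x 2 < 1/3 := by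
  obtain ⟨⟨h0, h1, h2, hsum⟩, heq, hge⟩ := hx
  have hx2 : x 0 = (1 - x 2)/2 := by linarith
  have hxe : x = pt (x 2) := by
    ext i; fin_cases i
    · simpa [pt] using hx2
    · show x 1 = (1 - x 2)/2
      rw [← heq]; exact hx2
    · rfl
  refine ⟨hxe, ?_, ?_⟩
  · rcases lt_or_eq_of_le h2 with h | h
    · exact h
    · exfalso; apply hxc
      rw [hxe, ← h, cpt_eq]
  · have hle : x 2 ≤ 1/3 := by
      have := heq ▸ hge
      linarith
    rcases lt_or_eq_of_le hle with h | h
    · exact h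
    · exfalso; apply hxC
      rw [hxe, h, Cpt_eq]

/-! ### expLogNeg conversion -/

lemma ae_mem_Icc {μ : Measure ℝ} [IsProbabilityMeasure μ] (hμ1 : μ (Set.Icc 0 1) = 1) :
    ∀ᵐ θ ∂μ, θ ∈ Set.Icc (0:ℝ) 1 := by
  rw [MeasureTheory.ae_iff]
  have hset : {a : ℝ | ¬ a ∈ Set.Icc (0:ℝ) 1} = (Set.Icc (0:ℝ) 1)ᶜ := rfl
  rw [hset, measure_compl measurableSet_Icc (measure_ne_top μ _), hμ1, measure_univ]
  simp

lemma expLogNeg_iff {μ : Measure ℝ} [IsProbabilityMeasure μ] (hμ1 : μ (Set.Icc 0 1) = 1)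
    {g : ℝ → ℝ} (hgm : Measurable g)
    (hlb : ∀ θ ∈ Set.Icc (0:ℝ) 1, (1/3:ℝ) ≤ g θ) (hub : ∀ θ ∈ Set.Icc (0:ℝ) 1, g θ ≤ 2) :
    expLogNeg μ g ↔ ∫ θ, Real.log (g θ) ∂μ < 0 := by
  have hae := ae_mem_Icc hμ1
  have habs : ∀ᵐ θ ∂μ, |Real.log (g θ)| ≤ Real.log 3 := by
    filter_upwards [hae] with θ hθ
    rw [abs_le]
    constructor
    · have h1 : Real.log (1/3) ≤ Real.log (g θ) :=
        Real.log_le_log (by norm_num) (hlb θ hθ)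
      have h13 : Real.log (1/3 : ℝ) = - Real.log 3 := by
        rw [Real.log_div one_ne_zero (by norm_num), Real.log_one]; ring
      linarith [h13 ▸ h1]
    · calc Real.log (g θ) ≤ Real.log 2 :=
        Real.log_le_log (lt_of_lt_of_le (by norm_num) (hlb θ hθ)) (hub θ hθ)
      _ ≤ Real.log 3 := Real.log_le_log (by norm_num) (by norm_num)
  have hint : Integrable (fun θ => Real.log (g θ)) μ := by
    refine Integrable.mono' (integrable_const (Real.log 3)) ?_ ?_
    · exact (Real.measurable_log.comp hgm).aestronglyMeasurable
    · simpa [Real.norm_eq_abs] using habs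
  have key := MeasureTheory.integral_eq_lintegral_pos_part_sub_lintegral_neg_part hint
  have hposeq : ∫⁻ θ, logPos (g θ) ∂μ = ∫⁻ θ, ENNReal.ofReal (Real.log (g θ)) ∂μ := rfl
  have hnegeq : ∫⁻ θ, logNeg (g θ) ∂μ = ∫⁻ θ, ENNReal.ofReal (- Real.log (g θ)) ∂μ := by
    apply lintegral_congr_ae
    filter_upwards [hae] with θ hθ
    have : ¬ (g θ ≤ 0) := by
      have := hlb θ hθ; linarith
    simp [logNeg, this]
  have hposfin : ∫⁻ θ, ENNReal.ofReal (Real.log (g θ)) ∂μ ≠ ⊤ := by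
    have hb : ∫⁻ θ, ENNReal.ofReal (Real.log (g θ)) ∂μ ≤ ENNReal.ofReal (Real.log 3) := by
      calc ∫⁻ θ, ENNReal.ofReal (Real.log (g θ)) ∂μ
          ≤ ∫⁻ _, ENNReal.ofReal (Real.log 3) ∂μ := by
            apply lintegral_mono_ae
            filter_upwards [habs] with θ hθ
            exact ENNReal.ofReal_le_ofReal (le_trans (le_abs_self _) hθ)
      _ = ENNReal.ofReal (Real.log 3) := by simp
    exact ne_top_of_le_ne_top ENNReal.ofReal_ne_top hb
  have hnegfin : ∫⁻ θ, ENNReal.ofReal (- Real.log (g θ)) ∂μ ≠ ⊤ := by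
    have hb : ∫⁻ θ, ENNReal.ofReal (- Real.log (g θ)) ∂μ ≤ ENNReal.ofReal (Real.log 3) := by
      calc ∫⁻ θ, ENNReal.ofReal (- Real.log (g θ)) ∂μ
          ≤ ∫⁻ _, ENNReal.ofReal (Real.log 3) ∂μ := by
            apply lintegral_mono_ae
            filter_upwards [habs] with θ hθ
            exact ENNReal.ofReal_le_ofReal ((neg_le_abs _).trans hθ)
      _ = ENNReal.ofReal (Real.log 3) := by simp
    exact ne_top_of_le_ne_top ENNReal.ofReal_ne_top hb
  unfold expLogNeg
  rw [hposeq, hnegeq, key]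
  rw [sub_neg]
  exact (ENNReal.toReal_lt_toReal hposfin hnegfin).symm


/-! ### the abstract random interval dynamics : submartingale (non-convergence) direction -/

section Abstract

variable {Ω : Type*} [MeasurableSpace Ω] {P : Measure Ω} [IsProbabilityMeasure P]
variable {μ : Measure ℝ} [IsProbabilityMeasure μ]
variable {Θ : ℕ → Ω → ℝ} {g σ : ℝ → ℝ}

set_option maxHeartbeats 1000000 in
theorem abstract_zero
    (hmeas : ∀ n, Measurable (Θ n))
    (hindep : iIndepFun Θ P)
    (hlaw : ∀ n, Measure.map (Θ n) P = μ)
    (hμ1 : μ (Set.Icc 0 1) = 1)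
    (hp : GoodPair g σ)
    {y₀ : ℝ} (hy₀ : y₀ ∈ Set.Ioo (0:ℝ) (1/3:ℝ))
    {Y : ℕ → Ω → ℝ} (hY0 : ∀ ω, Y 0 ω = y₀)
    (hYrec : ∀ n ω, Y (n+1) ω = Y n ω * rat g σ (clamp01 (Θ n ω)) (Y n ω))
    (hlam : 0 ≤ ∫ θ, Real.log (g θ) ∂μ) :
    P {ω | Tendsto (fun n => Y n ω) atTop (𝓝 0)} = 0 := by
  classical
  set lam : ℝ := ∫ θ, Real.log (g θ) ∂μ with hlamdef
  have hclamp : ∀ n (ω : Ω), clamp01 (Θ n ω) ∈ Set.Icc (0:ℝ) 1 := fun n ω => clamp01_mem _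
  -- the orbit stays in (0, 1/3]
  have hYmem : ∀ n (ω : Ω), Y n ω ∈ Set.Ioc (0:ℝ) (1/3:ℝ) := by
    intro n
    induction n with
    | zero => intro ω; rw [hY0]; exact ⟨hy₀.1, hy₀.2.le⟩
    | succ n ih => intro ω; rw [hYrec]; exact hp.inv _ (hclamp n ω) _ (ih ω)
  have hYIcc : ∀ n (ω : Ω), Y n ω ∈ Set.Icc (0:ℝ) (1/3:ℝ) :=
    fun n ω => ⟨(hYmem n ω).1.le, (hYmem n ω).2⟩
  -- measurability of the orbit
  have hYmeas : ∀ n, Measurable (Y n) := by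
    intro n
    induction n with
    | zero =>
        have : Y 0 = fun _ => y₀ := funext hY0
        rw [this]; exact measurable_const
    | succ n ih =>
        have : Y (n+1) = fun ω =>
            Y n ω * (1 - σ (Y n ω) + σ (Y n ω) * g (clamp01 (Θ n ω))) := funext (hYrec n)
        rw [this]
        exact ih.mul (((measurable_const.sub (hp.smeas.comp ih)).add
          ((hp.smeas.comp ih).mul (hp.gmeas.comp (measurable_clamp01.comp (hmeas n))))))
  -- the i.i.d. increments
  set u : ℕ → Ω → ℝ := fun n ω => Real.log (g (clamp01 (Θ n ω))) with hudef
  have humeas : ∀ n, Measurable (u n) :=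
    fun n => Real.measurable_log.comp (hp.gmeas.comp (measurable_clamp01.comp (hmeas n)))
  have huabs : ∀ n (ω : Ω), |u n ω| ≤ Real.log 3 := by
    intro n ω
    have h1 := hp.glb _ (hclamp n ω)
    have h2 := hp.gub _ (hclamp n ω)
    rw [abs_le]
    constructor
    · have h3 : Real.log (1/3) ≤ Real.log (g (clamp01 (Θ n ω))) :=
        Real.log_le_log (by norm_num) h1
      have h13 : Real.log (1/3 : ℝ) = - Real.log 3 := by
        rw [Real.log_div one_ne_zero (by norm_num), Real.log_one]; ring
      rw [h13] at h3; exact h3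
    · calc Real.log (g (clamp01 (Θ n ω))) ≤ Real.log 2 :=
          Real.log_le_log (lt_of_lt_of_le (by norm_num) h1) h2
      _ ≤ Real.log 3 := Real.log_le_log (by norm_num) (by norm_num)
  have huint : ∀ n, Integrable (u n) P := by
    intro n
    refine Integrable.mono' (integrable_const (Real.log 3)) (humeas n).aestronglyMeasurable ?_
    exact Filter.Eventually.of_forall (fun ω => by
      simpa [Real.norm_eq_abs] using huabs n ω)
  have huexp : ∀ n, ∫ ω, u n ω ∂P = lam := by
    intro n
    have hsm : AEStronglyMeasurable (fun t => Real.log (g (clamp01 t))) μ :=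
      (Real.measurable_log.comp (hp.gmeas.comp measurable_clamp01)).aestronglyMeasurable
    have h1 := integral_map (φ := Θ n) (μ := P) (hmeas n).aemeasurable
      (by rw [hlaw n]; exact hsm)
    rw [hlaw n] at h1
    rw [← h1]
    apply integral_congr_ae
    filter_upwards [ae_mem_Icc hμ1] with t ht
    rw [clamp01_eq ht]
  -- the filtration
  set Fseq : ℕ → MeasurableSpace Ω :=
    fun n => ⨆ k ∈ {i : ℕ | i < n}, MeasurableSpace.comap (Θ k) inferInstance with hFseq
  have Fmono : Monotone Fseq := by
    intro n m hnm
    exact biSup_mono (fun k hk => lt_of_lt_of_le hk hnm)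
  have Fle : ∀ n, Fseq n ≤ (inferInstance : MeasurableSpace Ω) :=
    fun n => iSup₂_le fun k _ => (hmeas k).comap_le
  set F : Filtration ℕ (inferInstance : MeasurableSpace Ω) := ⟨Fseq, Fmono, Fle⟩ with hFdef
  have hFapp : ∀ n, F n = Fseq n := fun n => rfl
  -- Θ k is F n measurable for k < n
  have hΘF : ∀ k n, k < n → Measurable[Fseq n] (Θ k) := by
    intro k n hk
    refine Measurable.of_comap_le ?_
    exact le_biSup (fun k : ℕ => MeasurableSpace.comap (Θ k) (inferInstance : MeasurableSpace ℝ))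
      (show k ∈ {i : ℕ | i < n} from hk)
  -- Y n is F n measurable
  have hYF : ∀ n, Measurable[Fseq n] (Y n) := by
    intro n
    induction n with
    | zero =>
        have : Y 0 = fun _ => y₀ := funext hY0
        rw [this]; exact measurable_const
    | succ n ih =>
        have heq : Y (n+1) = fun ω =>
            Y n ω * (1 - σ (Y n ω) + σ (Y n ω) * g (clamp01 (Θ n ω))) := funext (hYrec n)
        rw [heq]
        have hYn : Measurable[Fseq (n+1)] (Y n) := ih.mono (Fmono (Nat.le_succ n)) le_rfl
        have hΘn : Measurable[Fseq (n+1)] (Θ n) := hΘF n (n+1) (Nat.lt_succ_self n)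
        exact hYn.mul (((measurable_const.sub (hp.smeas.comp hYn)).add
          ((hp.smeas.comp hYn).mul (hp.gmeas.comp (measurable_clamp01.comp hΘn)))))
  -- the log-orbit process
  set L : ℕ → Ω → ℝ := fun n ω => Real.log (Y n ω) with hLdef
  have hLrec : ∀ n (ω : Ω), L (n+1) ω =
      L n ω + Real.log (rat g σ (clamp01 (Θ n ω)) (Y n ω)) := by
    intro n ω
    show Real.log (Y (n+1) ω) = _
    rw [hYrec n ω]
    exact Real.log_mul (hYmem n ω).1.ne' (hp.rat_pos (hclamp n ω) (hYIcc n ω)).ne'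
  have hdabs : ∀ n (ω : Ω), |Real.log (rat g σ (clamp01 (Θ n ω)) (Y n ω))| ≤ Real.log 3 :=
    fun n ω => hp.abs_log_rat_le (hclamp n ω) (hYIcc n ω)
  have hLabs : ∀ n (ω : Ω), |L n ω| ≤ |Real.log y₀| + n * Real.log 3 := by
    intro n
    induction n with
    | zero => intro ω; simp [hLdef, hY0 ω]
    | succ n ih =>
        intro ω
        have h1 := ih ω
        have h2 := hdabs n ω
        have := hLrec n ω
        have habs : |L (n+1) ω| ≤ |L n ω| + |Real.log (rat g σ (clamp01 (Θ n ω)) (Y n ω))| := by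
          rw [this]; exact abs_add_le _ _
        push_cast
        push_cast at h1
        nlinarith
  have hLmeas : ∀ n, Measurable (L n) := fun n => Real.measurable_log.comp (hYmeas n)
  have hLint : ∀ n, Integrable (L n) P := by
    intro n
    refine Integrable.mono' (integrable_const (|Real.log y₀| + n * Real.log 3))
      (hLmeas n).aestronglyMeasurable ?_
    exact Filter.Eventually.of_forall (fun ω => by
      simpa [Real.norm_eq_abs] using hLabs n ω)
  have hLF : ∀ n, StronglyMeasurable[F n] (L n) :=
    fun n => (Real.measurable_log.comp (hYF n)).stronglyMeasurable
  -- conditional expectation of u n given F n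
  have hu_cond : ∀ n, P[u n | F n] =ᵐ[P] fun _ => lam := by
    intro n
    have hle₁ : MeasurableSpace.comap (u n) inferInstance ≤
        (inferInstance : MeasurableSpace Ω) := (humeas n).comap_le
    have hsm₁ : StronglyMeasurable[MeasurableSpace.comap (u n) inferInstance] (u n) :=
      (Measurable.of_comap_le le_rfl).stronglyMeasurable
    have hindp : Indep (MeasurableSpace.comap (u n) inferInstance) (F n) P := by
      have hsingle : Indep (⨆ k ∈ ({n} : Set ℕ), MeasurableSpace.comap (Θ k) inferInstance)
          (Fseq n) P := by
        refine indep_iSup_of_disjoint (fun k => (hmeas k).comap_le) hindep.iIndep ?_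
        simp only [Set.disjoint_left, Set.mem_singleton_iff, Set.mem_setOf_eq]
        rintro a rfl
        exact lt_irrefl _
      have heq : (⨆ k ∈ ({n} : Set ℕ), MeasurableSpace.comap (Θ k) inferInstance)
          = MeasurableSpace.comap (Θ n) inferInstance := by simp
      rw [heq] at hsingle
      refine indep_of_indep_of_le_left hsingle ?_
      have : u n = (fun t => Real.log (g (clamp01 t))) ∘ (Θ n) := rfl
      rw [this, ← MeasurableSpace.comap_comp]
      exact MeasurableSpace.comap_mono
        (Real.measurable_log.comp (hp.gmeas.comp measurable_clamp01)).comap_le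
    have := condExp_indep_eq hle₁ (F.le n) hsm₁ hindp
    refine this.trans ?_
    rw [huexp n]
  -- the submartingale property
  have hsub : Submartingale L F P := by
    refine submartingale_nat ?_ hLint ?_
    · exact fun n => hLF n
    · intro n
      have hLsum : L (n+1) = L n + fun ω => Real.log (rat g σ (clamp01 (Θ n ω)) (Y n ω)) :=
        funext (hLrec n)
      have hdmeas : Measurable (fun ω => Real.log (rat g σ (clamp01 (Θ n ω)) (Y n ω))) := by
        have : (fun ω => Real.log (rat g σ (clamp01 (Θ n ω)) (Y n ω)))
            = fun ω => Real.log (1 - σ (Y n ω) + σ (Y n ω) * g (clamp01 (Θ n ω))) := rfl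
        rw [this]
        exact Real.measurable_log.comp (((measurable_const.sub
          (hp.smeas.comp (hYmeas n))).add ((hp.smeas.comp (hYmeas n)).mul
            (hp.gmeas.comp (measurable_clamp01.comp (hmeas n))))))
      have hdint : Integrable (fun ω => Real.log (rat g σ (clamp01 (Θ n ω)) (Y n ω))) P := by
        refine Integrable.mono' (integrable_const (Real.log 3))
          hdmeas.aestronglyMeasurable ?_
        exact Filter.Eventually.of_forall (fun ω => by
          simpa [Real.norm_eq_abs] using hdabs n ω)
      have hprodmeas : Measurable (fun ω => σ (Y n ω) * u n ω) :=
        (hp.smeas.comp (hYmeas n)).mul (humeas n)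
      have hprodint : Integrable (fun ω => σ (Y n ω) * u n ω) P := by
        refine Integrable.mono' (integrable_const (Real.log 3))
          hprodmeas.aestronglyMeasurable ?_
        refine Filter.Eventually.of_forall (fun ω => ?_)
        have h1 := hp.snn _ (hYIcc n ω)
        have h2 := hp.sle _ (hYIcc n ω)
        have h3 := huabs n ω
        rw [Real.norm_eq_abs, abs_mul, abs_of_nonneg h1]
        calc σ (Y n ω) * |u n ω| ≤ 1 * |u n ω| := by
              apply mul_le_mul_of_nonneg_right h2 (abs_nonneg _)
        _ = |u n ω| := one_mul _
        _ ≤ Real.log 3 := h3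
      -- pointwise lower bound
      have hpt : (fun ω => σ (Y n ω) * u n ω) ≤ᵐ[P]
          (fun ω => Real.log (rat g σ (clamp01 (Θ n ω)) (Y n ω))) :=
        Filter.Eventually.of_forall (fun ω => hp.log_rat_ge (hclamp n ω) (hYIcc n ω))
      have hmono := condExp_mono (m := F n) hprodint hdint hpt
      -- pull out
      have hpull : P[(fun ω => σ (Y n ω) * u n ω) | F n]
          =ᵐ[P] (fun ω => σ (Y n ω)) * P[u n | F n] := by
        have hsmσ : StronglyMeasurable[F n] (fun ω => σ (Y n ω)) :=
          (hp.smeas.comp (hYF n)).stronglyMeasurable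
        exact condExp_mul_of_stronglyMeasurable_left hsmσ hprodint (huint n)
      have hcondd : (fun ω => σ (Y n ω) * lam) ≤ᵐ[P]
          P[(fun ω => Real.log (rat g σ (clamp01 (Θ n ω)) (Y n ω))) | F n] := by
        filter_upwards [hmono, hpull, hu_cond n] with ω h1 h2 h3
        calc σ (Y n ω) * lam = σ (Y n ω) * (P[u n | F n]) ω := by rw [h3]
        _ = (P[(fun ω => σ (Y n ω) * u n ω) | F n]) ω := by
              rw [h2]; rfl
        _ ≤ _ := h1
      have hce : P[L (n+1) | F n] =ᵐ[P]
          L n + P[(fun ω => Real.log (rat g σ (clamp01 (Θ n ω)) (Y n ω))) | F n] := by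
        rw [hLsum]
        refine (condExp_add (hLint n) hdint _).trans ?_
        have : P[L n | F n] = L n :=
          condExp_of_stronglyMeasurable (F.le n) (hLF n) (hLint n)
        rw [this]
      filter_upwards [hce, hcondd] with ω h1 h2
      have hσnn : 0 ≤ σ (Y n ω) := hp.snn _ (hYIcc n ω)
      have : 0 ≤ σ (Y n ω) * lam := mul_nonneg hσnn hlam
      rw [h1]
      show L n ω ≤ L n ω + _
      have := le_trans this h2
      linarith
  -- bounded increments, and bounded above
  have hbdd : ∀ᵐ ω ∂P, ∀ i, |L (i+1) ω - L i ω| ≤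
      ((Real.toNNReal (Real.log 3) : NNReal) : ℝ) := by
    refine Filter.Eventually.of_forall (fun ω i => ?_)
    have h1 := hLrec i ω
    have h2 := hdabs i ω
    rw [Real.coe_toNNReal _ (Real.log_nonneg (by norm_num)), h1]
    simpa using h2
  have hconv := hsub.bddAbove_iff_exists_tendsto hbdd
  -- conclude
  have hnull : P {ω | ¬ (BddAbove (Set.range fun n => L n ω) ↔
      ∃ c, Tendsto (fun n => L n ω) atTop (𝓝 c))} = 0 := MeasureTheory.ae_iff.1 hconv
  refine measure_mono_null ?_ hnull
  intro ω hω
  simp only [Set.mem_setOf_eq] at hω ⊢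
  intro hiff
  -- on the tendsto-to-zero event, L tends to -∞ but is bounded above : contradiction
  have hLtop : Tendsto (fun n => L n ω) atTop atBot := by
    have hY0' : Tendsto (fun n => Y n ω) atTop (𝓝[>] 0) := by
      refine tendsto_nhdsWithin_of_tendsto_nhds_of_eventually_within _ hω ?_
      exact Filter.Eventually.of_forall (fun n => (hYmem n ω).1)
    exact Real.tendsto_log_nhdsGT_zero.comp hY0'
  have hBdd : BddAbove (Set.range fun n => L n ω) := by
    refine ⟨Real.log (1/3), ?_⟩
    rintro _ ⟨n, rfl⟩
    exact Real.log_le_log (hYmem n ω).1 (hYmem n ω).2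
  obtain ⟨c, hc⟩ := hiff.1 hBdd
  exact not_tendsto_nhds_of_tendsto_atBot hLtop c hc

end Abstract


/-! ### the abstract random interval dynamics : positive probability direction -/

section AbstractPos

variable {Ω : Type*} [MeasurableSpace Ω] {P : Measure Ω} [IsProbabilityMeasure P]
variable {μ : Measure ℝ} [IsProbabilityMeasure μ]
variable {Θ : ℕ → Ω → ℝ} {g σ : ℝ → ℝ}

/-- Existence of a bad set of positive measure where `g ≤ 1 - η`. -/
lemma exists_eta
    (hμ1 : μ (Set.Icc 0 1) = 1) (hp : GoodPair g σ)
    (hlam : ∫ θ, Real.log (g θ) ∂μ < 0) :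
    ∃ η : ℝ, 0 < η ∧ η ≤ 1 ∧ 0 < μ {θ | θ ∈ Set.Icc (0:ℝ) 1 ∧ g θ ≤ 1 - η} := by
  by_contra hcon
  push_neg at hcon
  have hzero : ∀ k : ℕ, μ {θ | θ ∈ Set.Icc (0:ℝ) 1 ∧ g θ ≤ 1 - 1/(k+1)} = 0 := by
    intro k
    have h1 : (0:ℝ) < 1/((k:ℝ)+1) := by positivity
    have h2 : (1:ℝ)/((k:ℝ)+1) ≤ 1 := by
      rw [div_le_one (by positivity)]
      simp
    exact le_antisymm (hcon _ h1 h2) zero_le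
  have hU : μ (⋃ k : ℕ, {θ | θ ∈ Set.Icc (0:ℝ) 1 ∧ g θ ≤ 1 - 1/(k+1)}) = 0 :=
    measure_iUnion_null (fun k => hzero k)
  have hgood : ∀ᵐ θ ∂μ, 0 ≤ Real.log (g θ) := by
    have h2 := measure_eq_zero_iff_ae_notMem.1 hU
    filter_upwards [h2, ae_mem_Icc hμ1] with θ hθ hIcc
    have hg1 : 1 ≤ g θ := by
      by_contra hg
      push_neg at hg
      obtain ⟨k, hk⟩ := exists_nat_one_div_lt (show (0:ℝ) < 1 - g θ by linarith)
      exact hθ (Set.mem_iUnion.2 ⟨k, ⟨hIcc, by push_cast; push_cast at hk; linarith⟩⟩)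
    exact Real.log_nonneg hg1
  have : 0 ≤ ∫ θ, Real.log (g θ) ∂μ := integral_nonneg_of_ae hgood
  linarith

set_option maxHeartbeats 1000000 in
theorem abstract_pos
    (hmeas : ∀ n, Measurable (Θ n))
    (hindep : iIndepFun Θ P)
    (hlaw : ∀ n, Measure.map (Θ n) P = μ)
    (hμ1 : μ (Set.Icc 0 1) = 1)
    (hp : GoodPair g σ)
    {y₀ : ℝ} (hy₀ : y₀ ∈ Set.Ioo (0:ℝ) (1/3:ℝ))
    {Y : ℕ → Ω → ℝ} (hY0 : ∀ ω, Y 0 ω = y₀)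
    (hYrec : ∀ n ω, Y (n+1) ω = Y n ω * rat g σ (clamp01 (Θ n ω)) (Y n ω))
    (hlam : ∫ θ, Real.log (g θ) ∂μ < 0) :
    0 < P {ω | Tendsto (fun n => Y n ω) atTop (𝓝 0)} := by
  classical
  set lam : ℝ := ∫ θ, Real.log (g θ) ∂μ with hlamdef
  have hclamp : ∀ n (ω : Ω), clamp01 (Θ n ω) ∈ Set.Icc (0:ℝ) 1 := fun n ω => clamp01_mem _
  have hYmem : ∀ n (ω : Ω), Y n ω ∈ Set.Ioc (0:ℝ) (1/3:ℝ) := by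
    intro n
    induction n with
    | zero => intro ω; rw [hY0]; exact ⟨hy₀.1, hy₀.2.le⟩
    | succ n ih => intro ω; rw [hYrec]; exact hp.inv _ (hclamp n ω) _ (ih ω)
  have hYIcc : ∀ n (ω : Ω), Y n ω ∈ Set.Icc (0:ℝ) (1/3:ℝ) :=
    fun n ω => ⟨(hYmem n ω).1.le, (hYmem n ω).2⟩
  -- increments
  set h : ℝ → ℝ := fun t => Real.log (g (clamp01 t)) with hhdef
  have hhmeas : Measurable h := Real.measurable_log.comp (hp.gmeas.comp measurable_clamp01)
  set u : ℕ → Ω → ℝ := fun n ω => h (Θ n ω) with hudef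
  have humeas : ∀ n, Measurable (u n) := fun n => hhmeas.comp (hmeas n)
  have huabs : ∀ n (ω : Ω), |u n ω| ≤ Real.log 3 := by
    intro n ω
    have h1 := hp.glb _ (hclamp n ω)
    have h2 := hp.gub _ (hclamp n ω)
    rw [abs_le]
    constructor
    · have h3 : Real.log (1/3) ≤ Real.log (g (clamp01 (Θ n ω))) :=
        Real.log_le_log (by norm_num) h1
      have h13 : Real.log (1/3 : ℝ) = - Real.log 3 := by
        rw [Real.log_div one_ne_zero (by norm_num), Real.log_one]; ring
      rw [h13] at h3; exact h3
    · calc Real.log (g (clamp01 (Θ n ω))) ≤ Real.log 2 :=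
          Real.log_le_log (lt_of_lt_of_le (by norm_num) h1) h2
      _ ≤ Real.log 3 := Real.log_le_log (by norm_num) (by norm_num)
  have huint : ∀ n, Integrable (u n) P := by
    intro n
    refine Integrable.mono' (integrable_const (Real.log 3)) (humeas n).aestronglyMeasurable ?_
    exact Filter.Eventually.of_forall (fun ω => by
      simpa [Real.norm_eq_abs] using huabs n ω)
  have huexp : ∀ n, ∫ ω, u n ω ∂P = lam := by
    intro n
    have hsm : AEStronglyMeasurable h μ := hhmeas.aestronglyMeasurable
    have h1 := integral_map (φ := Θ n) (μ := P) (hmeas n).aemeasurable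
      (by rw [hlaw n]; exact hsm)
    rw [hlaw n] at h1
    rw [show ∫ ω, u n ω ∂P = ∫ ω, h (Θ n ω) ∂P from rfl, ← h1]
    apply integral_congr_ae
    filter_upwards [ae_mem_Icc hμ1] with t ht
    show h t = Real.log (g t)
    rw [hhdef]
    simp only []
    rw [clamp01_eq ht]
  -- SLLN
  have hpair : Pairwise (Function.onFun (IndepFun · · P) u) := by
    intro i j hij
    exact (hindep.indepFun hij).comp hhmeas hhmeas
  have hident : ∀ i, IdentDistrib (u i) (u 0) P P := by
    intro i
    refine ⟨(humeas i).aemeasurable, (humeas 0).aemeasurable, ?_⟩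
    show Measure.map (h ∘ Θ i) P = Measure.map (h ∘ Θ 0) P
    rw [← Measure.map_map hhmeas (hmeas i), ← Measure.map_map hhmeas (hmeas 0), hlaw i, hlaw 0]
  have hslln := strong_law_ae u (huint 0) hpair hident
  rw [huexp 0] at hslln
  set ε : ℝ := -lam/2 with hεdef
  have hε : 0 < ε := by rw [hεdef]; linarith
  -- a.e. the drifted walk is bounded above
  have hWtop : ∀ᵐ ω ∂P, Tendsto
      (fun n : ℕ => (∑ k ∈ Finset.range n, u k ω) + ε * n) atTop atBot := by
    filter_upwards [hslln] with ω hω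
    have havg : Tendsto (fun n : ℕ => (n:ℝ)⁻¹ * (∑ k ∈ Finset.range n, u k ω) + ε)
        atTop (𝓝 (lam + ε)) := by
      refine Tendsto.add_const ε ?_
      simpa [smul_eq_mul] using hω
    have hneg : lam + ε < 0 := by rw [hεdef]; linarith
    have hmul : Tendsto (fun n : ℕ =>
        (n:ℝ) * ((n:ℝ)⁻¹ * (∑ k ∈ Finset.range n, u k ω) + ε)) atTop atBot :=
      Filter.Tendsto.atTop_mul_neg hneg tendsto_natCast_atTop_atTop havg
    refine hmul.congr' ?_
    filter_upwards [Filter.eventually_ge_atTop 1] with n hn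
    have hn0 : (n:ℝ) ≠ 0 := by positivity
    calc (n:ℝ) * ((n:ℝ)⁻¹ * (∑ k ∈ Finset.range n, u k ω) + ε)
        = ((n:ℝ) * (n:ℝ)⁻¹) * (∑ k ∈ Finset.range n, u k ω) + ε * n := by ring
    _ = (∑ k ∈ Finset.range n, u k ω) + ε * n := by
        rw [mul_inv_cancel₀ hn0, one_mul]
  have hbddB : ∀ᵐ ω ∂P, ∃ B : ℕ, ∀ n : ℕ,
      (∑ k ∈ Finset.range n, u k ω) + ε * n ≤ B := by
    filter_upwards [hWtop] with ω hω
    obtain ⟨N, hN⟩ := (hω.eventually_le_atBot 0).exists_forall_of_atTop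
    set T : Finset ℝ :=
      insert 0 ((Finset.range (N+1)).image
        (fun n => (∑ k ∈ Finset.range n, u k ω) + ε * n)) with hT
    have hTne : T.Nonempty := ⟨0, Finset.mem_insert_self _ _⟩
    refine ⟨Nat.ceil (T.max' hTne), fun n => ?_⟩
    have hceil : T.max' hTne ≤ (Nat.ceil (T.max' hTne) : ℝ) := Nat.le_ceil _
    rcases le_or_gt N n with hNn | hNn
    · have h0T : (0:ℝ) ≤ T.max' hTne := Finset.le_max' _ _ (Finset.mem_insert_self _ _)
      have := hN n hNn
      linarith
    · have hmem : ((∑ k ∈ Finset.range n, u k ω) + ε * n) ∈ T := by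
        refine Finset.mem_insert_of_mem ?_
        exact Finset.mem_image_of_mem _ (Finset.mem_range.2 (by omega))
      have := Finset.le_max' _ _ hmem
      linarith
  -- choose B with P(E B) > 1/2
  set EB : ℕ → Set Ω := fun B => {ω | ∀ n : ℕ,
      (∑ k ∈ Finset.range n, u k ω) + ε * n ≤ B} with hEBdef
  have hsummeas : ∀ a n, Measurable (fun ω => ∑ k ∈ Finset.range n, u (a+k) ω) := by
    intro a n
    exact Finset.measurable_sum _ (fun k _ => humeas (a+k))
  have hEBmeas : ∀ B, MeasurableSet (EB B) := by
    intro B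
    have : EB B = ⋂ n : ℕ, {ω | (∑ k ∈ Finset.range n, u k ω) + ε * n ≤ B} := by
      ext ω; simp [hEBdef, Set.mem_iInter]
    rw [this]
    refine MeasurableSet.iInter (fun n => ?_)
    have hm : Measurable (fun ω => (∑ k ∈ Finset.range (0+n), u (0+k) ω) + ε * n) := by
      simpa using (hsummeas 0 n).add_const (ε * n)
    simpa using measurableSet_le (by simpa using hm) measurable_const
  have hEBmono : Monotone EB := by
    intro B B' hBB ω hB n
    exact le_trans (hB n) (by exact_mod_cast Nat.cast_le.2 hBB)
  have hEBunion : P (⋃ B : ℕ, EB B) = 1 := by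
    have hae : ∀ᵐ ω ∂P, ω ∈ ⋃ B : ℕ, EB B := by
      filter_upwards [hbddB] with ω hω
      obtain ⟨B, hB⟩ := hω
      exact Set.mem_iUnion.2 ⟨B, hB⟩
    have : P ((⋃ B : ℕ, EB B)ᶜ) = 0 := by
      rw [MeasureTheory.ae_iff] at hae
      exact hae
    have hm : MeasurableSet (⋃ B : ℕ, EB B) := MeasurableSet.iUnion hEBmeas
    rw [← MeasureTheory.prob_compl_eq_zero_iff hm]
    exact this
  obtain ⟨B, hB⟩ : ∃ B : ℕ, (1/2 : ℝ≥0∞) < P (EB B) := by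
    have htend := tendsto_measure_iUnion_atTop (μ := P) hEBmono
    rw [hEBunion] at htend
    have : ∀ᶠ B in (atTop : Filter ℕ), (1/2 : ℝ≥0∞) < P (EB B) :=
      htend.eventually (eventually_gt_nhds (by norm_num))
    exact this.exists
  -- the contraction parameters
  obtain ⟨η, hη0, hη1, hSpos⟩ := exists_eta hμ1 hp hlam
  set Sset : Set ℝ := {θ | θ ∈ Set.Icc (0:ℝ) 1 ∧ g θ ≤ 1 - η} with hSdef
  have hSmeas : MeasurableSet Sset :=
    (measurableSet_Icc.inter (measurableSet_le hp.gmeas measurable_const))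
  set t : ℝ := Real.exp (-(ε/2)) with htdef
  have ht0 : 0 < t := Real.exp_pos _
  have ht1 : t < 1 := by
    rw [htdef]
    rw [Real.exp_lt_one_iff]
    linarith
  set δ : ℝ := min y₀ (ε * (1 - t) * Real.exp (-(B:ℝ)) / 24) with hδdef
  have hδ0 : 0 < δ := by
    refine lt_min hy₀.1 ?_
    have h1 := Real.exp_pos (-(B:ℝ))
    have h2 : (0:ℝ) < 1 - t := by linarith
    have := mul_pos (mul_pos hε h2) h1
    linarith
  set ρ : ℝ := 1 - σ y₀ * η with hρdef
  have hσy₀ : 0 < σ y₀ := hp.spos y₀ hy₀.1.le hy₀.2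
  have hσy₀le : σ y₀ ≤ 1 := hp.sle y₀ ⟨hy₀.1.le, hy₀.2.le⟩
  have hρ0 : 0 ≤ ρ := by rw [hρdef]; nlinarith
  have hρ1 : ρ < 1 := by rw [hρdef]; nlinarith
  obtain ⟨m, hm⟩ : ∃ m : ℕ, y₀ * ρ ^ m ≤ δ := by
    have hδy : 0 < δ / y₀ := div_pos hδ0 hy₀.1
    obtain ⟨m, hm⟩ := exists_pow_lt_of_lt_one hδy hρ1
    refine ⟨m, ?_⟩
    have h2 := (lt_div_iff₀ hy₀.1).1 hm
    nlinarith
  -- events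
  set A : Set Ω := ⋂ k ∈ Finset.range m, (Θ k)⁻¹' Sset with hAdef
  have hAmeas : MeasurableSet A := by
    rw [hAdef]
    exact Finset.measurableSet_biInter _ (fun k _ => (hmeas k) hSmeas)
  set G : Set Ω := {ω | ∀ n : ℕ,
      (∑ k ∈ Finset.range n, u (m+k) ω) + ε * n ≤ B} with hGdef
  -- step 1 : deterministic inclusion A ∩ G ⊆ target
  have hincl : A ∩ G ⊆ {ω | Tendsto (fun n => Y n ω) atTop (𝓝 0)} := by
    rintro ω ⟨hA, hG⟩
    have hAmem : ∀ k, k < m → Θ k ω ∈ Sset := by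
      intro k hk
      have := Set.mem_iInter₂.1 hA k (Finset.mem_range.2 hk)
      exact this
    -- reach phase
    have hreach : ∀ k, k ≤ m → Y k ω ≤ y₀ * ρ ^ k := by
      intro k
      induction k with
      | zero => intro _; rw [hY0]; simp
      | succ k ih =>
          intro hk1
          have hk : k < m := by omega
          have hYk := ih (by omega)
          have hY_le_y₀ : Y k ω ≤ y₀ := by
            have hpow : ρ ^ k ≤ 1 := pow_le_one₀ hρ0 hρ1.le
            nlinarith [hy₀.1]
          have hθ := hAmem k hk
          have hclampk : clamp01 (Θ k ω) = Θ k ω := clamp01_eq hθ.1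
          have hrat : rat g σ (clamp01 (Θ k ω)) (Y k ω) ≤ ρ := by
            rw [hclampk, hρdef]
            exact hp.rat_contract hη0.le hθ.2 (hYmem k ω).1.le hY_le_y₀ hy₀.2.le
          have hratnn : 0 ≤ rat g σ (clamp01 (Θ k ω)) (Y k ω) :=
            (hp.rat_pos (hclamp k ω) (hYIcc k ω)).le
          rw [hYrec]
          calc Y k ω * rat g σ (clamp01 (Θ k ω)) (Y k ω) ≤ (y₀ * ρ ^ k) * ρ := by
                apply mul_le_mul hYk hrat hratnn
                exact mul_nonneg hy₀.1.le (pow_nonneg hρ0 k)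
          _ = y₀ * ρ ^ (k+1) := by ring
    have hYm : Y m ω ≤ δ := le_trans (hreach m le_rfl) hm
    -- the product formula
    have hYprod : ∀ n : ℕ, Y (m+n) ω = Y m ω *
        ∏ k ∈ Finset.range n, rat g σ (clamp01 (Θ (m+k) ω)) (Y (m+k) ω) := by
      intro n
      induction n with
      | zero => simp
      | succ n ih =>
          have hstep : Y (m + (n+1)) ω =
              Y (m+n) ω * rat g σ (clamp01 (Θ (m+n) ω)) (Y (m+n) ω) := by
            exact hYrec (m+n) ω
          rw [hstep, Finset.prod_range_succ, ih]
          ring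
    -- contraction phase, by strong induction
    have hcontr : ∀ n : ℕ, Y (m+n) ω ≤ δ * Real.exp ((B:ℝ) - ε/2 * n) := by
      intro n
      induction n using Nat.strong_induction_on with
      | _ n ih =>
        rcases Nat.eq_zero_or_pos n with rfl | hn
        · have hBnn : (0:ℝ) ≤ (B:ℝ) - ε/2 * ((0:ℕ):ℝ) := by
            simp
          have h1 := Real.one_le_exp hBnn
          have h2 : Y (m+0) ω ≤ δ := by simpa using hYm
          calc Y (m+0) ω ≤ δ := h2
          _ ≤ δ * Real.exp ((B:ℝ) - ε/2 * ((0:ℕ):ℝ)) := by nlinarith [hδ0]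
        · have hprodle : Y (m+n) ω ≤ Y m ω *
              Real.exp ((∑ k ∈ Finset.range n, u (m+k) ω) +
                12 * ∑ k ∈ Finset.range n, Y (m+k) ω) := by
            have hfac : ∀ k ∈ Finset.range n,
                rat g σ (clamp01 (Θ (m+k) ω)) (Y (m+k) ω) ≤
                  Real.exp (u (m+k) ω + 12 * Y (m+k) ω) := by
              intro k _
              have h1 := hp.rat_le_exp (hclamp (m+k) ω) (hYIcc (m+k) ω)
              have hgpos : 0 < g (clamp01 (Θ (m+k) ω)) :=
                lt_of_lt_of_le (by norm_num) (hp.glb _ (hclamp (m+k) ω))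
              calc rat g σ (clamp01 (Θ (m+k) ω)) (Y (m+k) ω)
                  ≤ g (clamp01 (Θ (m+k) ω)) * Real.exp (12 * Y (m+k) ω) := h1
              _ = Real.exp (u (m+k) ω + 12 * Y (m+k) ω) := by
                  rw [Real.exp_add]
                  congr 1
                  exact (Real.exp_log hgpos).symm
            have hprod : ∏ k ∈ Finset.range n, rat g σ (clamp01 (Θ (m+k) ω)) (Y (m+k) ω) ≤
                ∏ k ∈ Finset.range n, Real.exp (u (m+k) ω + 12 * Y (m+k) ω) := by
              refine Finset.prod_le_prod ?_ hfac
              exact fun k _ => (hp.rat_pos (hclamp (m+k) ω) (hYIcc (m+k) ω)).le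
            rw [← Real.exp_sum] at hprod
            have hsplit : (∑ k ∈ Finset.range n, (u (m+k) ω + 12 * Y (m+k) ω)) =
                (∑ k ∈ Finset.range n, u (m+k) ω) + 12 * ∑ k ∈ Finset.range n, Y (m+k) ω := by
              rw [Finset.sum_add_distrib, Finset.mul_sum]
            rw [hsplit] at hprod
            have hYm0 : 0 ≤ Y m ω := (hYmem m ω).1.le
            calc Y (m+n) ω = Y m ω * ∏ k ∈ Finset.range n,
                  rat g σ (clamp01 (Θ (m+k) ω)) (Y (m+k) ω) := hYprod n
            _ ≤ Y m ω * Real.exp ((∑ k ∈ Finset.range n, u (m+k) ω) +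
                  12 * ∑ k ∈ Finset.range n, Y (m+k) ω) := by
                exact mul_le_mul_of_nonneg_left hprod hYm0
          -- bound the exponent
          have hsumY : ∑ k ∈ Finset.range n, Y (m+k) ω ≤ δ * Real.exp (B:ℝ) / (1 - t) := by
            have hterm : ∀ k ∈ Finset.range n, Y (m+k) ω ≤ (δ * Real.exp (B:ℝ)) * t ^ k := by
              intro k hk
              have := ih k (Finset.mem_range.1 hk)
              calc Y (m+k) ω ≤ δ * Real.exp ((B:ℝ) - ε/2 * k) := this
              _ = (δ * Real.exp (B:ℝ)) * t ^ k := by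
                  rw [htdef, ← Real.exp_nat_mul]
                  rw [mul_assoc, ← Real.exp_add]
                  congr 2
                  ring
            calc ∑ k ∈ Finset.range n, Y (m+k) ω ≤
                ∑ k ∈ Finset.range n, (δ * Real.exp (B:ℝ)) * t ^ k :=
                  Finset.sum_le_sum hterm
            _ = (δ * Real.exp (B:ℝ)) * ∑ k ∈ Finset.range n, t ^ k := by
                rw [Finset.mul_sum]
            _ ≤ (δ * Real.exp (B:ℝ)) * (1 / (1-t)) := by
                have hgeom : ∑ k ∈ Finset.range n, t ^ k ≤ 1 / (1-t) := by
                  rw [geom_sum_eq (ne_of_lt ht1), ← neg_div_neg_eq]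
                  simp only [neg_sub]
                  rw [div_le_div_iff₀ (by linarith) (by linarith)]
                  nlinarith [pow_nonneg ht0.le n]
                have : 0 ≤ δ * Real.exp (B:ℝ) := by positivity
                exact mul_le_mul_of_nonneg_left hgeom this
            _ = δ * Real.exp (B:ℝ) / (1 - t) := by ring
          have hδB : 12 * (δ * Real.exp (B:ℝ) / (1 - t)) ≤ ε / 2 := by
            have h1t : (0:ℝ) < 1 - t := by linarith
            have hδle : δ ≤ ε * (1 - t) * Real.exp (-(B:ℝ)) / 24 := min_le_right _ _
            have hexpB : (0:ℝ) < Real.exp (B:ℝ) := Real.exp_pos _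
            have h24 : δ * 24 ≤ ε * (1 - t) * Real.exp (-(B:ℝ)) :=
              (le_div_iff₀ (by norm_num)).1 hδle
            have h25 := mul_le_mul_of_nonneg_right h24 hexpB.le
            have hexp2 : Real.exp (-(B:ℝ)) * Real.exp (B:ℝ) = 1 := by
              rw [← Real.exp_add]; simp
            have h26 : δ * 24 * Real.exp (B:ℝ) ≤ ε * (1 - t) := by
              calc δ * 24 * Real.exp (B:ℝ) ≤
                  ε * (1 - t) * Real.exp (-(B:ℝ)) * Real.exp (B:ℝ) := h25
              _ = ε * (1 - t) * (Real.exp (-(B:ℝ)) * Real.exp (B:ℝ)) := by ring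
              _ = ε * (1 - t) := by rw [hexp2, mul_one]
            rw [show 12 * (δ * Real.exp (B:ℝ) / (1 - t)) =
                12 * δ * Real.exp (B:ℝ) / (1 - t) from by ring, div_le_iff₀ h1t]
            nlinarith
          have hG_n := hG n
          have hexp_le : (∑ k ∈ Finset.range n, u (m+k) ω) +
              12 * ∑ k ∈ Finset.range n, Y (m+k) ω ≤ (B:ℝ) - ε/2 * n := by
            have h12 : 12 * ∑ k ∈ Finset.range n, Y (m+k) ω ≤ ε/2 := by
              have h0 : 12 * ∑ k ∈ Finset.range n, Y (m+k) ω ≤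
                  12 * (δ * Real.exp (B:ℝ) / (1 - t)) := by
                have := hsumY
                nlinarith
              linarith
            have hn1 : (1:ℝ) ≤ n := by exact_mod_cast hn
            have : ε/2 ≤ ε * n - ε/2 * n := by nlinarith
            linarith
          calc Y (m+n) ω ≤ Y m ω * Real.exp ((∑ k ∈ Finset.range n, u (m+k) ω) +
                12 * ∑ k ∈ Finset.range n, Y (m+k) ω) := hprodle
          _ ≤ δ * Real.exp ((B:ℝ) - ε/2 * n) := by
              have h1 : Real.exp ((∑ k ∈ Finset.range n, u (m+k) ω) +
                  12 * ∑ k ∈ Finset.range n, Y (m+k) ω) ≤ Real.exp ((B:ℝ) - ε/2 * n) :=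
                Real.exp_le_exp.2 hexp_le
              have h2 : 0 < Real.exp ((∑ k ∈ Finset.range n, u (m+k) ω) +
                  12 * ∑ k ∈ Finset.range n, Y (m+k) ω) := Real.exp_pos _
              nlinarith [(hYmem m ω).1, hδ0]
    -- conclude convergence
    have htail : Tendsto (fun n => Y (n + m) ω) atTop (𝓝 0) := by
      have hub : ∀ n : ℕ, Y (n + m) ω ≤ (δ * Real.exp (B:ℝ)) * t ^ n := by
        intro n
        have := hcontr n
        rw [Nat.add_comm n m]
        calc Y (m+n) ω ≤ δ * Real.exp ((B:ℝ) - ε/2 * n) := this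
        _ = (δ * Real.exp (B:ℝ)) * t ^ n := by
            rw [htdef, ← Real.exp_nat_mul, mul_assoc, ← Real.exp_add]
            congr 2
            ring
      have hlb : ∀ n : ℕ, 0 ≤ Y (n + m) ω := fun n => (hYmem (n+m) ω).1.le
      have hgeo : Tendsto (fun n : ℕ => (δ * Real.exp (B:ℝ)) * t ^ n) atTop (𝓝 0) := by
        have := tendsto_pow_atTop_nhds_zero_of_lt_one ht0.le ht1
        simpa using this.const_mul (δ * Real.exp (B:ℝ))
      exact squeeze_zero hlb hub hgeo
    rw [show {ω | Tendsto (fun n => Y n ω) atTop (𝓝 0)} =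
        {ω | Tendsto (fun n => Y n ω) atTop (𝓝 0)} from rfl]
    exact Set.mem_setOf_eq ▸ (tendsto_add_atTop_iff_nat m).1 htail
  -- ===================== measure-theoretic part =====================
  -- P(A) = μ(Sset)^m > 0
  have hPA : P A = (μ Sset) ^ m := by
    have hApre : ∀ k, MeasurableSet[(MeasurableSpace.comap (Θ k)
        (inferInstance : MeasurableSpace ℝ))] ((Θ k)⁻¹' Sset) :=
      fun k => ⟨Sset, hSmeas, rfl⟩
    rw [hAdef, hindep.meas_biInter (fun k _ => hApre k)]
    have hone : ∀ k ∈ Finset.range m, P ((Θ k)⁻¹' Sset) = μ Sset := by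
      intro k _
      rw [← hlaw k, Measure.map_apply (hmeas k) hSmeas]
    rw [Finset.prod_congr rfl hone, Finset.prod_const, Finset.card_range]
  have hPA0 : 0 < P A := by
    rw [hPA]; exact ENNReal.pow_pos hSpos m
  -- the law of finite tuples is the product measure
  set V : ℕ → (N : ℕ) → Ω → (Fin N → ℝ) := fun a N ω i => Θ (a + i) ω with hVdef
  have hVmeas : ∀ a N, Measurable (V a N) :=
    fun a N => measurable_pi_lambda _ (fun i => hmeas (a + i))
  have hlawV : ∀ a N, Measure.map (V a N) P = Measure.pi (fun _ : Fin N => μ) := by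
    intro a N
    refine (Measure.pi_eq (fun s hs => ?_)).symm
    rw [Measure.map_apply (hVmeas a N) (MeasurableSet.univ_pi hs)]
    set s' : ℕ → Set ℝ := fun i => if hi : i < N then s ⟨i, hi⟩ else Set.univ with hs'def
    have hs'meas : ∀ i, MeasurableSet (s' i) := by
      intro i
      rw [hs'def]
      by_cases hi : i < N
      · simpa [hi] using hs ⟨i, hi⟩
      · simp [hi]
    have hpre : (V a N) ⁻¹' (Set.pi Set.univ s) =
        ⋂ j ∈ Finset.Ico a (a + N), (Θ j)⁻¹' (s' (j - a)) := by
      ext ω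
      simp only [Set.mem_preimage, Set.mem_pi, Set.mem_univ, forall_true_left, Set.mem_iInter,
        Finset.mem_Ico]
      constructor
      · rintro hv j ⟨hj1, hj2⟩
        have hlt : j - a < N := by omega
        have hseq : s' (j - a) = s ⟨j - a, hlt⟩ := by rw [hs'def]; simp [hlt]
        rw [hseq]
        have h1 := hv ⟨j - a, hlt⟩
        have h3 : V a N ω ⟨j - a, hlt⟩ = Θ j ω := by
          show Θ (a + (j - a)) ω = Θ j ω
          congr 1
          omega
        rw [h3] at h1
        exact h1
      · intro hj i
        have hiN := i.isLt
        have h1 := hj (a + (i : ℕ)) ⟨by omega, by omega⟩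
        have h2 : a + (i:ℕ) - a = (i:ℕ) := by omega
        rw [h2] at h1
        have h3 : s' (i:ℕ) = s i := by rw [hs'def]; simp [hiN]
        rw [h3] at h1
        exact h1
    rw [hpre]
    have hmeasb : ∀ j, MeasurableSet[(MeasurableSpace.comap (Θ j)
        (inferInstance : MeasurableSpace ℝ))] ((Θ j)⁻¹' (s' (j - a))) :=
      fun j => ⟨s' (j - a), hs'meas _, rfl⟩
    rw [hindep.meas_biInter (fun j _ => hmeasb j)]
    have hone : ∀ j ∈ Finset.Ico a (a + N), P ((Θ j)⁻¹' (s' (j - a))) = μ (s' (j - a)) := by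
      intro j _
      rw [← hlaw j, Measure.map_apply (hmeas j) (hs'meas _)]
    rw [Finset.prod_congr rfl hone, Finset.prod_Ico_eq_prod_range]
    have hcanc : a + N - a = N := by omega
    rw [hcanc]
    have hterm : ∀ i ∈ Finset.range N, μ (s' (a + i - a)) = μ (s' i) := by
      intro i _
      have h2 : a + i - a = i := by omega
      rw [h2]
    rw [Finset.prod_congr rfl hterm]
    rw [← Fin.prod_univ_eq_prod_range (fun i => μ (s' i)) N]
    refine Finset.prod_congr rfl (fun i _ => ?_)
    have h3 : s' (i : ℕ) = s i := by rw [hs'def]; simp [i.isLt]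
    rw [h3]
  -- the partial events
  set vext : (N : ℕ) → (Fin N → ℝ) → ℕ → ℝ :=
    fun N v k => if hk : k < N then v ⟨k, hk⟩ else 0 with hvextdef
  set MN : (N : ℕ) → Set (Fin N → ℝ) := fun N =>
    {v | ∀ n : ℕ, n ≤ N → (∑ k ∈ Finset.range n, h (vext N v k)) + ε * n ≤ B} with hMNdef
  have hMNmeas : ∀ N, MeasurableSet (MN N) := by
    intro N
    have : MN N = ⋂ (n : ℕ), ⋂ (_ : n ≤ N),
        {v : Fin N → ℝ | (∑ k ∈ Finset.range n, h (vext N v k)) + ε * n ≤ B} := by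
      ext v; simp [hMNdef, Set.mem_iInter]
    rw [this]
    refine MeasurableSet.iInter (fun n => MeasurableSet.iInter (fun _ => ?_))
    have hf : Measurable (fun v : Fin N → ℝ =>
        (∑ k ∈ Finset.range n, h (vext N v k)) + ε * n) := by
      refine Measurable.add_const ?_ _
      refine Finset.measurable_sum _ (fun k _ => ?_)
      rw [hvextdef]
      by_cases hk : k < N
      · simp only [hk, dif_pos]
        exact hhmeas.comp (measurable_pi_apply _)
      · simp only [hk, dif_neg, not_false_iff]
        exact measurable_const
    exact measurableSet_le hf measurable_const
  set H : ℕ → ℕ → Set Ω := fun a N => (V a N) ⁻¹' (MN N) with hHdef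
  have hHmeas : ∀ a N, MeasurableSet (H a N) :=
    fun a N => (hVmeas a N) (hMNmeas N)
  have hHexplicit : ∀ a N, H a N = {ω | ∀ n : ℕ, n ≤ N →
      (∑ k ∈ Finset.range n, u (a+k) ω) + ε * n ≤ B} := by
    intro a N
    ext ω
    simp only [hHdef, Set.mem_preimage, hMNdef, Set.mem_setOf_eq]
    constructor
    · intro hv n hn
      have := hv n hn
      have hsumeq : (∑ k ∈ Finset.range n, h (vext N (V a N ω) k))
          = ∑ k ∈ Finset.range n, u (a+k) ω := by
        refine Finset.sum_congr rfl (fun k hk => ?_)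
        have hkN : k < N := lt_of_lt_of_le (Finset.mem_range.1 hk) hn
        rw [hvextdef]
        simp only [hkN, dif_pos]
        try rfl
      rw [hsumeq] at this
      exact this
    · intro hω n hn
      have hsumeq : (∑ k ∈ Finset.range n, h (vext N (V a N ω) k))
          = ∑ k ∈ Finset.range n, u (a+k) ω := by
        refine Finset.sum_congr rfl (fun k hk => ?_)
        have hkN : k < N := lt_of_lt_of_le (Finset.mem_range.1 hk) hn
        rw [hvextdef]
        simp only [hkN, dif_pos]
        try rfl
      rw [hsumeq]
      exact hω n hn
  have hPH : ∀ a N, P (H a N) = Measure.pi (fun _ : Fin N => μ) (MN N) := by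
    intro a N
    rw [hHdef, ← Measure.map_apply (hVmeas a N) (hMNmeas N), hlawV a N]
  have hHanti : ∀ a, Antitone (H a) := by
    intro a N N' hNN'
    rw [hHexplicit a N, hHexplicit a N']
    intro ω hω n hn
    exact hω n (le_trans hn hNN')
  have hGinter : ∀ a, (⋂ N, H a N) = {ω | ∀ n : ℕ,
      (∑ k ∈ Finset.range n, u (a+k) ω) + ε * n ≤ B} := by
    intro a
    ext ω
    simp only [Set.mem_iInter, Set.mem_setOf_eq]
    constructor
    · intro hω n
      have h1 := hω n
      rw [hHexplicit a n] at h1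
      exact h1 n le_rfl
    · intro hω N
      rw [hHexplicit a N]
      exact fun n _ => hω n
  -- P G = P (EB B)
  have hGm : G = ⋂ N, H m N := by
    rw [hGinter m, hGdef]
  have hEB0 : EB B = ⋂ N, H 0 N := by
    rw [hGinter 0, hEBdef]
    ext ω
    simp only [Set.mem_setOf_eq]
    constructor
    · intro hω n; have := hω n; simpa [Nat.zero_add] using this
    · intro hω n; have := hω n; simpa [Nat.zero_add] using this
  have hPGtend : ∀ a, Tendsto (fun N => P (H a N)) atTop (𝓝 (P (⋂ N, H a N))) := by
    intro a
    exact tendsto_measure_iInter_atTop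
      (fun N => (hHmeas a N).nullMeasurableSet) (hHanti a) ⟨0, measure_ne_top P _⟩
  have hPG_eq : P G = P (EB B) := by
    rw [hGm, hEB0]
    have h1 := hPGtend m
    have h2 := hPGtend 0
    have hfeq : (fun N => P (H m N)) = fun N => P (H 0 N) := by
      funext N
      rw [hPH m N, hPH 0 N]
    rw [hfeq] at h1
    exact tendsto_nhds_unique h1 h2
  -- independence of A and H m N
  have hcomap_le : ∀ (a N : ℕ) (T : Set ℕ), (∀ i : Fin N, a + (i:ℕ) ∈ T) →
      MeasurableSpace.comap (V a N) (inferInstance : MeasurableSpace (Fin N → ℝ)) ≤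
        ⨆ k ∈ T, MeasurableSpace.comap (Θ k) (inferInstance : MeasurableSpace ℝ) := by
    intro a N T hT
    rw [show (inferInstance : MeasurableSpace (Fin N → ℝ)) =
        MeasurableSpace.pi from rfl, MeasurableSpace.pi, MeasurableSpace.comap_iSup]
    refine iSup_le (fun i => ?_)
    rw [MeasurableSpace.comap_comp]
    have heq : ((fun b : Fin N → ℝ => b i) ∘ (V a N)) = Θ (a + i) := rfl
    rw [heq]
    exact le_biSup (fun k => MeasurableSpace.comap (Θ k) (inferInstance : MeasurableSpace ℝ))
      (hT i)
  have hIndepUV : ∀ N, IndepFun (V 0 m) (V m N) P := by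
    intro N
    have hbig := indep_iSup_of_disjoint (fun k => (hmeas k).comap_le) hindep.iIndep
      (S := {j : ℕ | j < m}) (T := {j : ℕ | m ≤ j})
      (by
        rw [Set.disjoint_left]
        intro j hj1 hj2
        simp only [Set.mem_setOf_eq] at hj1 hj2
        omega)
    rw [IndepFun_iff_Indep]
    refine indep_of_indep_of_le_left (indep_of_indep_of_le_right hbig ?_) ?_
    · exact hcomap_le m N _ (fun i => by simp)
    · refine hcomap_le 0 m _ (fun i => ?_)
      simp only [Set.mem_setOf_eq, Nat.zero_add]
      exact i.isLt
  -- A as a preimage under V 0 m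
  have hApre2 : A = (V 0 m) ⁻¹' {v : Fin m → ℝ | ∀ i, v i ∈ Sset} := by
    ext ω
    simp only [hAdef, Set.mem_iInter, Set.mem_preimage, Set.mem_setOf_eq, Finset.mem_range]
    constructor
    · intro hω i
      show Θ (0 + (i:ℕ)) ω ∈ Sset
      rw [Nat.zero_add]
      exact hω (i:ℕ) i.isLt
    · intro hω k hk
      have h1 := hω ⟨k, hk⟩
      have h2 : V 0 m ω ⟨k, hk⟩ = Θ k ω := by
        show Θ (0 + k) ω = Θ k ω
        rw [Nat.zero_add]
      rw [h2] at h1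
      exact h1
  have hboxmeas : MeasurableSet {v : Fin m → ℝ | ∀ i, v i ∈ Sset} := by
    have : {v : Fin m → ℝ | ∀ i, v i ∈ Sset} = ⋂ i : Fin m, (fun v : Fin m → ℝ => v i)⁻¹' Sset := by
      ext v; simp [Set.mem_iInter]
    rw [this]
    exact MeasurableSet.iInter (fun i => (measurable_pi_apply i) hSmeas)
  have hsplit : ∀ N, P (A ∩ H m N) = P A * P (H m N) := by
    intro N
    rw [hApre2, hHdef]
    exact (indepFun_iff_measure_inter_preimage_eq_mul.1 (hIndepUV N)) _ _ hboxmeas (hMNmeas N)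
  -- combine
  have hAG : P (A ∩ G) = P A * P G := by
    have hAGinter : A ∩ G = ⋂ N, (A ∩ H m N) := by
      rw [hGm, Set.inter_iInter]
    have htend1 : Tendsto (fun N => P (A ∩ H m N)) atTop (𝓝 (P (A ∩ G))) := by
      rw [hAGinter]
      refine tendsto_measure_iInter_atTop
        (fun N => ((hAmeas).inter (hHmeas m N)).nullMeasurableSet) ?_ ⟨0, measure_ne_top P _⟩
      intro N N' hNN'
      exact Set.inter_subset_inter_right _ (hHanti m hNN')
    have htend2 : Tendsto (fun N => P A * P (H m N)) atTop (𝓝 (P A * P G)) := by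
      rw [hGm]
      exact ENNReal.Tendsto.const_mul (hPGtend m) (Or.inr (measure_ne_top P _))
    have hfeq : (fun N => P (A ∩ H m N)) = fun N => P A * P (H m N) := funext hsplit
    rw [hfeq] at htend1
    exact tendsto_nhds_unique htend1 htend2
  -- conclusion
  have hPG0 : 0 < P G := by
    rw [hPG_eq]
    exact lt_trans (by norm_num) hB
  calc (0:ℝ≥0∞) < P A * P G := ENNReal.mul_pos hPA0.ne' hPG0.ne'
  _ = P (A ∩ G) := hAG.symm
  _ ≤ P {ω | Tendsto (fun n => Y n ω) atTop (𝓝 0)} := measure_mono hincl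

end AbstractPos

end AttractorAux

/-- Theorem 2.2 b). -/
theorem attractor_on_M12 (μ : Measure ℝ) [IsProbabilityMeasure μ] (hμ1 : μ (Set.Icc 0 1) = 1)
    (hμ : μ ≠ Measure.dirac (2/3 : ℝ))
    {Ω : Type*} [MeasurableSpace Ω] (P : Measure Ω) [IsProbabilityMeasure P]
    (Θ : ℕ → Ω → ℝ) (hmeas : ∀ n, Measurable (Θ n))
    (hindep : iIndepFun Θ P)
    (hlaw : ∀ n, Measure.map (Θ n) P = μ)
    (x : EuclideanSpace ℝ (Fin 3)) (hx : x ∈ M12) (hxC : x ≠ Cpt) (hxc : x ≠ cpt) :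
    (0 < P {ω | Tendsto (fun n => phiRDS (fun k => Θ k ω) n x) atTop (𝓝 Cpt)} ↔
      expLogNeg μ (fun θ => 1/3 + θ)) ∧
    (0 < P {ω | Tendsto (fun n => phiRDS (fun k => Θ k ω) n x) atTop (𝓝 cpt)} ↔
      expLogNeg μ (fun θ => 2 - 3/2 * θ)) := by
  classical
  open AttractorAux in
  obtain ⟨hxe, hz0, hz13⟩ := x_eq_pt hx hxC hxc
  set z₀ : ℝ := x 2 with hz₀def
  -- the clamped interval processes
  set Z : ℕ → Ω → ℝ := fun n ω => orb z₀ (fun k => clamp01 (Θ k ω)) n with hZdef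
  have hZ0 : ∀ ω : Ω, Z 0 ω = z₀ := fun ω => rfl
  have hZrec : ∀ (n : ℕ) (ω : Ω),
      Z (n+1) ω = Z n ω * rat gc sc (clamp01 (Θ n ω)) (Z n ω) := fun n ω => rfl
  set W : ℕ → Ω → ℝ := fun n ω => 1/3 - Z n ω with hWdef
  have hW0 : ∀ ω : Ω, W 0 ω = 1/3 - z₀ := fun ω => rfl
  have hWrec : ∀ (n : ℕ) (ω : Ω),
      W (n+1) ω = W n ω * rat gC sC (clamp01 (Θ n ω)) (W n ω) := by
    intro n ω
    show 1/3 - Fc (clamp01 (Θ n ω)) (Z n ω) = _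
    rw [key_identity]
  -- a.s. all coordinates lie in [0,1]
  have hae01 : ∀ᵐ ω ∂P, ∀ k, Θ k ω ∈ Set.Icc (0:ℝ) 1 := by
    rw [ae_all_iff]
    intro k
    have h1 : P ((Θ k)⁻¹' (Set.Icc 0 1)) = 1 := by
      rw [← Measure.map_apply (hmeas k) measurableSet_Icc, hlaw k, hμ1]
    have h2 : P (((Θ k)⁻¹' (Set.Icc 0 1))ᶜ) = 0 := by
      rw [MeasureTheory.prob_compl_eq_zero_iff ((hmeas k) measurableSet_Icc)]
      exact h1
    rw [MeasureTheory.ae_iff]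
    exact h2
  -- event identifications
  have horb : ∀ᵐ ω ∂P, ∀ n, phiRDS (fun k => Θ k ω) n x = pt (Z n ω) := by
    filter_upwards [hae01] with ω hω
    intro n
    have hθeq : (fun k => clamp01 (Θ k ω)) = fun k => Θ k ω :=
      funext (fun k => clamp01_eq (hω k))
    rw [hxe, phiRDS_pt]
    show pt (orb z₀ (fun k => Θ k ω) n) = pt (orb z₀ (fun k => clamp01 (Θ k ω)) n)
    rw [hθeq]
  have hev_c : {ω | Tendsto (fun n => phiRDS (fun k => Θ k ω) n x) atTop (𝓝 cpt)}
      =ᵐ[P] {ω | Tendsto (fun n => Z n ω) atTop (𝓝 0)} := by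
    rw [Filter.eventuallyEq_set]
    filter_upwards [horb] with ω hω
    show Tendsto (fun n => phiRDS (fun k => Θ k ω) n x) atTop (𝓝 cpt) ↔ _
    rw [show (fun n => phiRDS (fun k => Θ k ω) n x) = fun n => pt (Z n ω) from funext hω,
      cpt_eq]
    exact tendsto_pt_iff
  have hev_C : {ω | Tendsto (fun n => phiRDS (fun k => Θ k ω) n x) atTop (𝓝 Cpt)}
      =ᵐ[P] {ω | Tendsto (fun n => W n ω) atTop (𝓝 0)} := by
    rw [Filter.eventuallyEq_set]
    filter_upwards [horb] with ω hω
    show Tendsto (fun n => phiRDS (fun k => Θ k ω) n x) atTop (𝓝 Cpt) ↔ _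
    rw [show (fun n => phiRDS (fun k => Θ k ω) n x) = fun n => pt (Z n ω) from funext hω,
      Cpt_eq]
    rw [tendsto_pt_iff]
    constructor
    · intro h
      have h1 := h.const_sub (1/3 : ℝ)
      have h2 : (1/3 : ℝ) - 1/3 = 0 := by norm_num
      rw [h2] at h1
      exact h1
    · intro h
      have := h.const_sub (1/3 : ℝ)
      simp only [sub_zero] at this
      have h2 : (fun n => 1/3 - W n ω) = fun n => Z n ω := by
        funext n
        rw [hWdef]
        ring
      rw [h2] at this
      simpa using this
  have hz₀Ioo : z₀ ∈ Set.Ioo (0:ℝ) (1/3:ℝ) := ⟨hz0, hz13⟩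
  have hw₀Ioo : (1/3 - z₀) ∈ Set.Ioo (0:ℝ) (1/3:ℝ) := by
    constructor <;> [linarith; linarith]
  constructor
  · -- convergence to Cpt
    rw [measure_congr hev_C]
    rw [show (fun θ : ℝ => 1/3 + θ) = gC from rfl]
    rw [expLogNeg_iff hμ1 gp_C.gmeas gp_C.glb gp_C.gub]
    constructor
    · intro hpos
      by_contra hge
      push_neg at hge
      rw [abstract_zero hmeas hindep hlaw hμ1 gp_C hw₀Ioo hW0 hWrec hge] at hpos
      exact lt_irrefl _ hpos
    · intro hexp
      exact abstract_pos hmeas hindep hlaw hμ1 gp_C hw₀Ioo hW0 hWrec hexp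
  · -- convergence to cpt
    rw [measure_congr hev_c]
    rw [show (fun θ : ℝ => 2 - 3/2 * θ) = gc from rfl]
    rw [expLogNeg_iff hμ1 gp_c.gmeas gp_c.glb gp_c.gub]
    constructor
    · intro hpos
      by_contra hge
      push_neg at hge
      rw [abstract_zero hmeas hindep hlaw hμ1 gp_c hz₀Ioo hZ0 hZrec hge] at hpos
      exact lt_irrefl _ hpos
    · intro hexp
      exact abstract_pos hmeas hindep hlaw hμ1 gp_c hz₀Ioo hZ0 hZrec hexp
end
end

section
/- Assume the support of μ has nonempty intersection with (2/3, 1]. Then for every ε > 0 and every x ∈ int(G₁) there exists N ∈ ℕ such that P(d(φ_N(x,·), e₁) < ε) > 0, where d is the Euclidean distance on ℝ³. (Lemma 2.3, second part.) -/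
open MeasureTheory ProbabilityTheory Filter Topology
open scoped ENNReal

noncomputable section

set_option maxHeartbeats 1600000 in
/-- Pure real algebra: one step of `V_θ` preserves the good region and contracts `1 - a`. -/
lemma cubic_step (θ d a b c : ℝ) (hθ : 2/3 ≤ θ) (hθ1 : θ ≤ 1) (hd : 0 ≤ d)
    (hc : 0 ≤ c) (hcb : c ≤ b) (hba : b + d ≤ a) (hsum : a + b + c = 1) :
    0 ≤ c * (c^2 + 3*θ*c*(a+b) + 3*(1-θ)*(a^2+b^2) + 2*a*b) ∧
    c * (c^2 + 3*θ*c*(a+b) + 3*(1-θ)*(a^2+b^2) + 2*a*b)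
      ≤ b * (b^2 + 3*θ*b*(c+a) + 3*(1-θ)*(c^2+a^2) + 2*c*a) ∧
    b * (b^2 + 3*θ*b*(c+a) + 3*(1-θ)*(c^2+a^2) + 2*c*a) + d
      ≤ a * (a^2 + 3*θ*a*(b+c) + 3*(1-θ)*(b^2+c^2) + 2*b*c) ∧
    a * (a^2 + 3*θ*a*(b+c) + 3*(1-θ)*(b^2+c^2) + 2*b*c)
      + b * (b^2 + 3*θ*b*(c+a) + 3*(1-θ)*(c^2+a^2) + 2*c*a)
      + c * (c^2 + 3*θ*c*(a+b) + 3*(1-θ)*(a^2+b^2) + 2*a*b) = 1 ∧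
    1 - a * (a^2 + 3*θ*a*(b+c) + 3*(1-θ)*(b^2+c^2) + 2*b*c)
      ≤ (1 - (3*θ - 2)*d/3) * (1 - a) := by
  have hb : 0 ≤ b := le_trans hc hcb
  have ha : 0 ≤ a := by linarith
  have ha1 : a ≤ 1 := by linarith
  have ha3 : 1/3 ≤ a := by linarith
  have hd1 : d ≤ 1 := by linarith
  have ht : 0 ≤ 3*θ - 2 := by linarith
  have ht1 : 3*θ - 2 ≤ 1 := by linarith
  have htm : 0 ≤ 1 - θ := by linarith
  set Q0 : ℝ := a^2 + 3*θ*a*(b+c) + 3*(1-θ)*(b^2+c^2) + 2*b*c with hQ0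
  set Q1 : ℝ := b^2 + 3*θ*b*(c+a) + 3*(1-θ)*(c^2+a^2) + 2*c*a with hQ1
  set Q2 : ℝ := c^2 + 3*θ*c*(a+b) + 3*(1-θ)*(a^2+b^2) + 2*a*b with hQ2
  have hq2 : 0 ≤ Q2 := by
    have h1 : 0 ≤ 3*θ*c*(a+b) := by
      have h0 : (0:ℝ) ≤ 3*θ := by linarith
      have := mul_nonneg (mul_nonneg h0 hc) (by linarith : (0:ℝ) ≤ a + b)
      linarith
    have h2 : 0 ≤ 3*(1-θ)*(a^2+b^2) := by positivity
    nlinarith [sq_nonneg c, mul_nonneg ha hb]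
  have hq1 : 0 ≤ Q1 := by
    have h1 : 0 ≤ 3*θ*b*(c+a) := by
      have h0 : (0:ℝ) ≤ 3*θ := by linarith
      have := mul_nonneg (mul_nonneg h0 hb) (by linarith : (0:ℝ) ≤ c + a)
      linarith
    have h2 : 0 ≤ 3*(1-θ)*(c^2+a^2) := by positivity
    nlinarith [sq_nonneg b, mul_nonneg hc ha]
  have hsum' : a*Q0 + b*Q1 + c*Q2 = 1 := by
    have h : a*Q0 + b*Q1 + c*Q2 = (a+b+c)^3 := by rw [hQ0, hQ1, hQ2]; ring
    rw [h, hsum]; norm_num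
  have e0 : Q0 - 1 = (3*θ-2)*(b*(a-b)+c*(a-c)) := by
    have h : Q0*(a+b+c) - (a+b+c)^3 = (3*θ-2)*(b*(a-b)+c*(a-c))*(a+b+c) := by
      rw [hQ0]; ring
    rw [hsum] at h; linear_combination h
  have hX : 0 ≤ b*(a-b)+c*(a-c) := by
    nlinarith [mul_nonneg hb (by linarith : (0:ℝ) ≤ a - b),
      mul_nonneg hc (by linarith : (0:ℝ) ≤ a - c)]
  have hq0ge1 : 1 ≤ Q0 := by nlinarith [mul_nonneg ht hX]
  have e12 : b*Q1 - c*Q2 = (b-c)*Q1 + (3*θ-2)*c*(b-c)*(a+b+c) := by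
    rw [hQ1, hQ2]; ring
  have e01 : a*Q0 - b*Q1 = (a-b)*Q0 + (3*θ-2)*b*(a-b)*(a+b+c) := by
    rw [hQ0, hQ1]; ring
  rw [hsum] at e12 e01
  refine ⟨mul_nonneg hc hq2, ?_, ?_, hsum', ?_⟩
  · nlinarith [mul_nonneg (by linarith : (0:ℝ) ≤ b - c) hq1,
      mul_nonneg (mul_nonneg ht hc) (by linarith : (0:ℝ) ≤ b - c)]
  · nlinarith [mul_nonneg (by linarith : (0:ℝ) ≤ a - b - d) (by linarith : (0:ℝ) ≤ Q0 - 1),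
      mul_nonneg (mul_nonneg ht hb) (by linarith : (0:ℝ) ≤ a - b)]
  · have econ : 1 - a*Q0 = (1-a) - (3*θ-2)*a*(b*(a-b)+c*(a-c)) := by
      nlinarith [e0]
    have hXlb : (1-a)*d ≤ b*(a-b)+c*(a-c) := by
      nlinarith [mul_nonneg hb (by linarith : (0:ℝ) ≤ a - b - d),
        mul_nonneg hc (by linarith : (0:ℝ) ≤ a - c - d)]
    have key : (3*θ-2)*d/3*(1-a) ≤ (3*θ-2)*a*(b*(a-b)+c*(a-c)) := by
      have h1 : (3*θ-2)*(1/3)*((1-a)*d) ≤ (3*θ-2)*(1/3)*(b*(a-b)+c*(a-c)) := by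
        apply mul_le_mul_of_nonneg_left hXlb; positivity
      have h2 : (3*θ-2)*(1/3)*(b*(a-b)+c*(a-c)) ≤ (3*θ-2)*a*(b*(a-b)+c*(a-c)) := by
        apply mul_le_mul_of_nonneg_right _ hX
        nlinarith
      linarith [h1, h2]
    nlinarith [econ, key]

def goodT (d : ℝ) (y : EuclideanSpace ℝ (Fin 3)) : Prop :=
  0 ≤ y 2 ∧ y 2 ≤ y 1 ∧ y 1 + d ≤ y 0 ∧ y 0 + y 1 + y 2 = 1

lemma Vcso_apply0 (θ : ℝ) (x : EuclideanSpace ℝ (Fin 3)) :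
    Vcso θ x 0 = x 0 * ((x 0)^2 + 3*θ*(x 0)*(x 1 + x 2) + 3*(1-θ)*((x 1)^2 + (x 2)^2) + 2*(x 1)*(x 2)) := rfl

lemma Vcso_apply1 (θ : ℝ) (x : EuclideanSpace ℝ (Fin 3)) :
    Vcso θ x 1 = x 1 * ((x 1)^2 + 3*θ*(x 1)*(x 2 + x 0) + 3*(1-θ)*((x 2)^2 + (x 0)^2) + 2*(x 2)*(x 0)) := rfl

lemma Vcso_apply2 (θ : ℝ) (x : EuclideanSpace ℝ (Fin 3)) :
    Vcso θ x 2 = x 2 * ((x 2)^2 + 3*θ*(x 2)*(x 0 + x 1) + 3*(1-θ)*((x 0)^2 + (x 1)^2) + 2*(x 0)*(x 1)) := rfl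

lemma goodT_step {θ d : ℝ} (hθ : 2/3 ≤ θ) (hθ1 : θ ≤ 1) (hd : 0 ≤ d)
    {y : EuclideanSpace ℝ (Fin 3)} (h : goodT d y) :
    goodT d (Vcso θ y) ∧ 1 - Vcso θ y 0 ≤ (1 - (3*θ - 2)*d/3) * (1 - y 0) := by
  obtain ⟨hc, hcb, hba, hsum⟩ := h
  obtain ⟨k1, k2, k3, k4, k5⟩ :=
    cubic_step θ d (y 0) (y 1) (y 2) hθ hθ1 hd hc hcb hba hsum
  rw [goodT, Vcso_apply0, Vcso_apply1, Vcso_apply2]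
  exact ⟨⟨k1, k2, k3, k4⟩, k5⟩

lemma goodT_le_one {d : ℝ} {y : EuclideanSpace ℝ (Fin 3)} (h : goodT d y) : y 0 ≤ 1 := by
  obtain ⟨hc, hcb, hba, hsum⟩ := h; linarith [le_trans hc hcb]

lemma orbit_bound (θs : ℕ → ℝ) {θL d : ℝ} (hL23 : 2/3 ≤ θL) (hL1 : θL ≤ 1) (hd : 0 ≤ d)
    {x : EuclideanSpace ℝ (Fin 3)} (hx : goodT d x) (N : ℕ)
    (hθs : ∀ k < N, θL ≤ θs k ∧ θs k ≤ 1) :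
    goodT d (phiRDS θs N x) ∧
      1 - phiRDS θs N x 0 ≤ (1 - (3*θL - 2)*d/3)^N * (1 - x 0) := by
  induction N with
  | zero => exact ⟨hx, by simp [phiRDS]⟩
  | succ n ih =>
    obtain ⟨hg, hb⟩ := ih (fun k hk => hθs k (Nat.lt_succ_of_lt hk))
    obtain ⟨hθa, hθb⟩ := hθs n (Nat.lt_succ_self n)
    have hstep := goodT_step (by linarith) hθb hd hg
    refine ⟨hstep.1, ?_⟩
    have hy1 : phiRDS θs n x 0 ≤ 1 := goodT_le_one hg
    have hd1 : d ≤ 1 := by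
      obtain ⟨hc, hcb, hba, hsum⟩ := id hx; linarith [le_trans hc hcb, goodT_le_one hx]
    have hx1 : x 0 ≤ 1 := goodT_le_one hx
    have hρ0 : (0:ℝ) ≤ 1 - (3*θL - 2)*d/3 := by nlinarith
    have hf0 : (0:ℝ) ≤ 1 - (3*(θs n) - 2)*d/3 := by nlinarith
    have hfρ : 1 - (3*(θs n) - 2)*d/3 ≤ 1 - (3*θL - 2)*d/3 := by nlinarith
    have hpow : (0:ℝ) ≤ (1 - (3*θL - 2)*d/3)^n * (1 - x 0) := by
      apply mul_nonneg (pow_nonneg hρ0 n); linarith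
    have h1 : 1 - phiRDS θs (n+1) x 0 ≤ (1 - (3*(θs n) - 2)*d/3) * (1 - phiRDS θs n x 0) := by
      simpa [phiRDS] using hstep.2
    calc 1 - phiRDS θs (n+1) x 0
        ≤ (1 - (3*(θs n) - 2)*d/3) * (1 - phiRDS θs n x 0) := h1
      _ ≤ (1 - (3*θL - 2)*d/3) * ((1 - (3*θL - 2)*d/3)^n * (1 - x 0)) := by
          calc (1 - (3*(θs n) - 2)*d/3) * (1 - phiRDS θs n x 0)
              ≤ (1 - (3*(θs n) - 2)*d/3) * ((1 - (3*θL - 2)*d/3)^n * (1 - x 0)) :=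
                mul_le_mul_of_nonneg_left hb hf0
            _ ≤ _ := mul_le_mul_of_nonneg_right hfρ hpow
      _ = (1 - (3*θL - 2)*d/3)^(n+1) * (1 - x 0) := by ring

lemma dist_e1_lt {d t ε : ℝ} {y : EuclideanSpace ℝ (Fin 3)} (hg : goodT d y)
    (hεt : t < ε/2) (ht0 : 0 ≤ t) (h0 : 1 - y 0 ≤ t) : dist y e1 < ε := by
  obtain ⟨hc, hcb, hba, hsum⟩ := hg
  have hb : 0 ≤ y 1 := le_trans hc hcb
  have hy1 : y 0 ≤ 1 := by linarith
  have hε : 0 < ε := by linarith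
  have hde : dist y e1 = Real.sqrt ((y 0 - 1)^2 + (y 1)^2 + (y 2)^2) := by
    rw [EuclideanSpace.dist_eq]
    congr 1
    rw [Fin.sum_univ_three]
    have he0 : e1 0 = 1 := rfl
    have he1 : e1 1 = 0 := rfl
    have he2 : e1 2 = 0 := rfl
    rw [he0, he1, he2]
    simp only [Real.dist_eq, sq_abs]
    ring
  rw [hde]
  rw [Real.sqrt_lt' hε]
  nlinarith [sq_nonneg (y 1 + y 2), sq_nonneg (y 1 - y 2), mul_nonneg hc hb]


/-- Lemma 2.3, second part. -/
theorem reach_e1_with_positive_probability (μ : Measure ℝ) [IsProbabilityMeasure μ] (hμ1 : μ (Set.Icc 0 1) = 1)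
    (hsupp : (measSupport μ ∩ Set.Ioc (2/3) 1).Nonempty)
    {Ω : Type*} [MeasurableSpace Ω] (P : Measure Ω) [IsProbabilityMeasure P]
    (Θ : ℕ → Ω → ℝ) (hmeas : ∀ n, Measurable (Θ n))
    (hindep : iIndepFun Θ P)
    (hlaw : ∀ n, Measure.map (Θ n) P = μ) :
    ∀ ε > (0:ℝ), ∀ x ∈ intG1, ∃ N : ℕ,
      0 < P {ω | dist (phiRDS (fun k => Θ k ω) N x) e1 < ε} := by
  intro ε hε x hx
  obtain ⟨θc, hθsup, hθ23, hθ1⟩ := hsupp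
  set δ : ℝ := (θc - 2/3)/2 with hδdef
  have hδpos : 0 < δ := by simp only [hδdef]; linarith
  set θL : ℝ := θc - δ with hθLdef
  have hθL23 : 2/3 < θL := by simp only [hθLdef, hδdef]; linarith
  have hθL1 : θL ≤ 1 := by simp only [hθLdef]; linarith
  set S : Set ℝ := Set.Ioo (θc - δ) (θc + δ) ∩ Set.Icc 0 1 with hSdef
  have hSmeas : MeasurableSet S := measurableSet_Ioo.inter measurableSet_Icc
  have hμS : 0 < μ S := by
    have hμI : 0 < μ (Set.Ioo (θc - δ) (θc + δ)) :=
      hθsup _ isOpen_Ioo ⟨by linarith, by linarith⟩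
    have hcompl : μ (Set.Icc (0:ℝ) 1)ᶜ = 0 := by
      have h := measure_compl (measurableSet_Icc (a := (0:ℝ)) (b := 1)) (measure_ne_top μ _)
      rw [hμ1, measure_univ] at h
      simpa using h
    have hdiff : μ (Set.Ioo (θc - δ) (θc + δ) \ Set.Icc 0 1) = 0 :=
      measure_mono_null (Set.diff_subset_compl _ _) hcompl
    have hle := measure_le_inter_add_diff μ (Set.Ioo (θc - δ) (θc + δ)) (Set.Icc 0 1)
    rw [hdiff, add_zero] at hle
    exact lt_of_lt_of_le hμI hle
  -- the initial point
  obtain ⟨⟨hx0, hx1, hx2, hxsum⟩, hx01, hx12, hx2pos⟩ := hx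
  set d : ℝ := x 0 - x 1 with hddef
  have hd : 0 < d := by simp only [hddef]; linarith
  have hgood : goodT d x := ⟨le_of_lt hx2pos, le_of_lt hx12, by simp only [hddef]; linarith, hxsum⟩
  set ρ : ℝ := 1 - (3*θL - 2)*d/3 with hρdef
  have hd1 : d ≤ 1 := by simp only [hddef]; linarith
  have hρlt1 : ρ < 1 := by
    simp only [hρdef]
    nlinarith
  obtain ⟨N, hN⟩ := exists_pow_lt_of_lt_one (by linarith : (0:ℝ) < ε/2) hρlt1
  have hρ0 : 0 ≤ ρ := by simp only [hρdef]; nlinarith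
  refine ⟨N, ?_⟩
  -- the event forcing all parameters into S
  have hEsub : (⋂ k ∈ Finset.range N, (Θ k) ⁻¹' S) ⊆
      {ω | dist (phiRDS (fun k => Θ k ω) N x) e1 < ε} := by
    intro ω hω
    simp only [Set.mem_iInter, Set.mem_preimage] at hω
    have hθs : ∀ k < N, θL ≤ Θ k ω ∧ Θ k ω ≤ 1 := by
      intro k hk
      obtain ⟨⟨hlo, hhi⟩, hmem2⟩ := hω k (Finset.mem_range.2 hk)
      exact ⟨le_of_lt hlo, hmem2.2⟩
    obtain ⟨hgN, hbN⟩ := orbit_bound (fun k => Θ k ω) (le_of_lt hθL23) hθL1 (le_of_lt hd)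
      hgood N hθs
    have hx0le1 : x 0 ≤ 1 := goodT_le_one hgood
    have hbound : 1 - phiRDS (fun k => Θ k ω) N x 0 ≤ ρ^N := by
      have hpn : (0:ℝ) ≤ ρ^N := pow_nonneg hρ0 N
      have : ρ^N * (1 - x 0) ≤ ρ^N * 1 := by
        apply mul_le_mul_of_nonneg_left _ hpn
        linarith
      rw [mul_one] at this
      exact le_trans hbN this
    exact dist_e1_lt hgN hN (pow_nonneg hρ0 N) hbound
  have hPE : P (⋂ k ∈ Finset.range N, (Θ k) ⁻¹' S) = (μ S)^N := by
    rw [hindep.meas_biInter (fun k _ => ⟨S, hSmeas, rfl⟩)]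
    have hcst : ∀ k, P ((Θ k) ⁻¹' S) = μ S := fun k => by
      rw [← hlaw k, Measure.map_apply (hmeas k) hSmeas]
    rw [Finset.prod_congr rfl (fun k _ => hcst k), Finset.prod_const, Finset.card_range]
  have hpos : 0 < P (⋂ k ∈ Finset.range N, (Θ k) ⁻¹' S) := by
    rw [hPE]; exact ENNReal.pow_pos hμS N
  exact lt_of_lt_of_le hpos (measure_mono hEsub)
end
end

section
/- Regard V_θ as a polynomial map ℝ³ → ℝ³ defined by the same formulas. For every θ ∈ [0,1] and every v ∈ ℝ³ with v₁ + v₂ + v₃ = 0, the Fréchet derivative of V_θ at the point C = (1/3,1/3,1/3) applied to v equals (1/3 + θ)·v, and the Fréchet derivative of V_θ at the point e₁ = (1,0,0) applied to v equals 3(1−θ)·v. (In particular, on the tangent space of the simplex, DV_θ(C) and DV_θ(e₁) are the scalars 1/3+θ and 3(1−θ) respectively.) -/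
open MeasureTheory ProbabilityTheory Filter Topology
open scoped ENNReal

noncomputable section

private lemma lin_hasDerivAt (a b : ℝ) : HasDerivAt (fun t : ℝ => a + t * b) b 0 := by
  simpa using (((hasDerivAt_id (0:ℝ)).mul_const b).const_add a)

private lemma comp_hasDerivAt (θ a0 a1 a2 b0 b1 b2 : ℝ) :
    HasDerivAt (fun t : ℝ =>
      (a0 + t*b0) * ((a0 + t*b0)^2 + 3*θ*(a0 + t*b0)*((a1 + t*b1) + (a2 + t*b2))
        + 3*(1-θ)*((a1 + t*b1)^2 + (a2 + t*b2)^2) + 2*(a1 + t*b1)*(a2 + t*b2)))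
      (b0*(a0^2 + 3*θ*a0*(a1+a2) + 3*(1-θ)*(a1^2+a2^2) + 2*a1*a2)
        + a0*(2*a0*b0 + 3*θ*(b0*(a1+a2) + a0*(b1+b2)) + 3*(1-θ)*(2*a1*b1 + 2*a2*b2)
          + 2*(b1*a2 + a1*b2))) 0 := by
  have h0 := lin_hasDerivAt a0 b0
  have h1 := lin_hasDerivAt a1 b1
  have h2 := lin_hasDerivAt a2 b2
  have hQ := (((h0.pow 2).add (((h0.const_mul (3*θ)).mul (h1.add h2)))).add
      (((h1.pow 2).add (h2.pow 2)).const_mul (3*(1-θ)))).add ((h1.const_mul 2).mul h2)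
  refine ((h0.mul hQ).congr_deriv ?_).congr_of_eventuallyEq (Filter.Eventually.of_forall fun t => ?_)
  · simp only [Pi.add_apply, Pi.mul_apply, Pi.pow_apply]; push_cast
    ring
  · simp only [Pi.add_apply, Pi.mul_apply, Pi.pow_apply]

private lemma proj_diff (j : Fin 3) :
    Differentiable ℝ (fun x : EuclideanSpace ℝ (Fin 3) => x j) :=
  (EuclideanSpace.proj (𝕜 := ℝ) j).differentiable

private lemma diff_comp (θ : ℝ) (i j k : Fin 3) :
    Differentiable ℝ (fun x : EuclideanSpace ℝ (Fin 3) =>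
      x i * ((x i)^2 + 3*θ*(x i)*(x j + x k) + 3*(1-θ)*((x j)^2 + (x k)^2) + 2*(x j)*(x k))) := by
  have hi := proj_diff i
  have hj := proj_diff j
  have hk := proj_diff k
  exact hi.mul ((((hi.pow 2).add ((hi.const_mul (3*θ)).mul (hj.add hk))).add
      (((hj.pow 2).add (hk.pow 2)).const_mul (3*(1-θ)))).add ((hj.const_mul 2).mul hk))

private lemma vcso_differentiable (θ : ℝ) : Differentiable ℝ (Vcso θ) := by
  have hg : Differentiable ℝ (fun x : EuclideanSpace ℝ (Fin 3) => (fun i => Vcso θ x i : Fin 3 → ℝ)) := by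
    rw [differentiable_pi]
    intro i
    fin_cases i <;>
      simp only [Vcso, Matrix.cons_val_zero, Matrix.cons_val_one, Matrix.head_cons,
        Matrix.cons_val_two, Matrix.tail_cons, Fin.isValue]
    · exact diff_comp θ 0 1 2
    · exact diff_comp θ 1 2 0
    · exact diff_comp θ 2 0 1
  have he : Vcso θ = fun x =>
      (PiLp.continuousLinearEquiv 2 ℝ (fun _ : Fin 3 => ℝ)).symm ((fun i => Vcso θ x i)) := rfl
  rw [he]
  exact ((PiLp.continuousLinearEquiv 2 ℝ (fun _ : Fin 3 => ℝ)).symm.differentiable).comp hg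

private lemma fderiv_apply_eq (θ : ℝ) (p v w : EuclideanSpace ℝ (Fin 3))
    (h : ∀ i : Fin 3, HasDerivAt (fun t : ℝ => Vcso θ (p + t • v) i) (w i) 0) :
    fderiv ℝ (Vcso θ) p v = w := by
  have hc : HasDerivAt (fun t : ℝ => p + t • v) v 0 := by
    simpa using (((hasDerivAt_id (0:ℝ)).smul_const v).const_add p)
  have hd : HasFDerivAt (Vcso θ) (fderiv ℝ (Vcso θ) p) ((fun t : ℝ => p + t • v) 0) := by
    simpa using ((vcso_differentiable θ) p).hasFDerivAt
  have h1 : HasDerivAt (fun t : ℝ => Vcso θ (p + t • v)) (fderiv ℝ (Vcso θ) p v) 0 :=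
    by have := hd.comp_hasDerivAt 0 hc; exact this
  have h2 : HasDerivAt (fun t : ℝ => Vcso θ (p + t • v)) w 0 := by
    have hpi : HasDerivAt (fun t : ℝ =>
        (PiLp.continuousLinearEquiv 2 ℝ (fun _ : Fin 3 => ℝ)) (Vcso θ (p + t • v)))
        ((PiLp.continuousLinearEquiv 2 ℝ (fun _ : Fin 3 => ℝ)) w) 0 :=
      hasDerivAt_pi.2 h
    have h3 := ((PiLp.continuousLinearEquiv 2 ℝ
        (fun _ : Fin 3 => ℝ)).symm.toContinuousLinearMap.hasFDerivAt).comp_hasDerivAt 0 hpi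
    exact h3
  exact h1.unique h2

/-- On the tangent space of the simplex, DV_θ(C) is multiplication by 1/3 + θ and
DV_θ(e₁) is multiplication by 3(1-θ). -/
theorem fderiv_at_C_and_e1 :
    ∀ θ ∈ Set.Icc (0:ℝ) 1, ∀ v : EuclideanSpace ℝ (Fin 3), v 0 + v 1 + v 2 = 0 →
      fderiv ℝ (Vcso θ) Cpt v = (1/3 + θ) • v ∧
      fderiv ℝ (Vcso θ) e1 v = (3 * (1 - θ)) • v := by
  intro θ _ v hv
  have hv2 : v 2 = -v 0 - v 1 := by linarith
  constructor
  · apply fderiv_apply_eq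
    intro i
    fin_cases i
    · show HasDerivAt (fun t : ℝ => Vcso θ (Cpt + t • v) 0) ((1/3 + θ) * v 0) 0
      convert comp_hasDerivAt θ (1/3) (1/3) (1/3) (v 0) (v 1) (v 2) using 1
      · rfl
      rw [hv2]; ring
    · show HasDerivAt (fun t : ℝ => Vcso θ (Cpt + t • v) 1) ((1/3 + θ) * v 1) 0
      convert comp_hasDerivAt θ (1/3) (1/3) (1/3) (v 1) (v 2) (v 0) using 1
      · rfl
      rw [hv2]; ring
    · show HasDerivAt (fun t : ℝ => Vcso θ (Cpt + t • v) 2) ((1/3 + θ) * v 2) 0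
      convert comp_hasDerivAt θ (1/3) (1/3) (1/3) (v 2) (v 0) (v 1) using 1
      · rfl
      rw [hv2]; ring
  · apply fderiv_apply_eq
    intro i
    fin_cases i
    · show HasDerivAt (fun t : ℝ => Vcso θ (e1 + t • v) 0) ((3 * (1 - θ)) * v 0) 0
      convert comp_hasDerivAt θ 1 0 0 (v 0) (v 1) (v 2) using 1
      · rfl
      rw [hv2]; ring
    · show HasDerivAt (fun t : ℝ => Vcso θ (e1 + t • v) 1) ((3 * (1 - θ)) * v 1) 0
      convert comp_hasDerivAt θ 0 0 1 (v 1) (v 2) (v 0) using 1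
      · rfl
      ring
    · show HasDerivAt (fun t : ℝ => Vcso θ (e1 + t • v) 2) ((3 * (1 - θ)) * v 2) 0
      convert comp_hasDerivAt θ 0 1 0 (v 2) (v 0) (v 1) using 1
      · rfl
      ring
end
end

section
/- Regard V_θ as a polynomial map ℝ³ → ℝ³ defined by the same formulas. For every θ ∈ [0,1], the Fréchet derivative of V_θ at the point c = (1/2,1/2,0) satisfies: DV_θ(c)(1,−1,0) = (3θ/2)·(1,−1,0) and DV_θ(c)(1,1,−2) = (2 − 3θ/2)·(1,1,−2). (So on the tangent space of the simplex, DV_θ(c) has eigenvalues 3θ/2 and 2 − 3θ/2 with eigenvectors (1,−1,0) and (1,1,−2).) -/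
open MeasureTheory ProbabilityTheory Filter Topology
open scoped ENNReal

noncomputable section

section aux

variable (θ : ℝ)

private abbrev E3 := EuclideanSpace ℝ (Fin 3)

private def P (i : Fin 3) : E3 →L[ℝ] ℝ := PiLp.proj 2 (fun _ : Fin 3 => ℝ) i

private def lD (θ : ℝ) : Fin 3 → (E3 →L[ℝ] ℝ) :=
  ![(3/2 + 3*θ/4) • P 0 + (3/2 - 3*θ/4) • P 1 + (3*θ/4 + 1/2) • P 2,
    (3/2 - 3*θ/4) • P 0 + (3/2 + 3*θ/4) • P 1 + (3*θ/4 + 1/2) • P 2,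
    (2 - 3*θ/2) • P 2]

private def Ld (θ : ℝ) : E3 →L[ℝ] E3 :=
  ((PiLp.continuousLinearEquiv 2 ℝ (fun _ : Fin 3 => ℝ)).symm :
      (Fin 3 → ℝ) →L[ℝ] E3).comp (ContinuousLinearMap.pi (lD θ))

private lemma hVderiv : HasFDerivAt (Vcso θ) (Ld θ) cpt := by
  have h0 : HasFDerivAt (fun x : E3 => x 0) (P 0) cpt := PiLp.hasFDerivAt_apply 2 cpt 0
  have h1 : HasFDerivAt (fun x : E3 => x 1) (P 1) cpt := PiLp.hasFDerivAt_apply 2 cpt 1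
  have h2 : HasFDerivAt (fun x : E3 => x 2) (P 2) cpt := PiLp.hasFDerivAt_apply 2 cpt 2
  have hs0 : HasFDerivAt (fun x : E3 => (x 0)^2) (cpt 0 • P 0 + cpt 0 • P 0) cpt := by
    simpa only [pow_two, Pi.mul_def] using h0.mul h0
  have hs1 : HasFDerivAt (fun x : E3 => (x 1)^2) (cpt 1 • P 1 + cpt 1 • P 1) cpt := by
    simpa only [pow_two, Pi.mul_def] using h1.mul h1
  have hs2 : HasFDerivAt (fun x : E3 => (x 2)^2) (cpt 2 • P 2 + cpt 2 • P 2) cpt := by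
    simpa only [pow_two, Pi.mul_def] using h2.mul h2
  have c0 : (cpt : E3) 0 = 1/2 := by simp [cpt]
  have c1 : (cpt : E3) 1 = 1/2 := by simp [cpt]
  have c2 : (cpt : E3) 2 = 0 := by simp [cpt]
  have H0 : HasFDerivAt (fun x : E3 =>
      x 0 * ((x 0)^2 + 3*θ*(x 0)*(x 1 + x 2) + 3*(1-θ)*((x 1)^2 + (x 2)^2) + 2*(x 1)*(x 2)))
      (lD θ 0) cpt := by
    refine (h0.mul ((((hs0).add ((h0.const_mul (3*θ)).mul (h1.add h2))).add
      ((hs1.add hs2).const_mul (3*(1-θ)))).add ((h1.const_mul 2).mul h2))).congr_fderiv ?_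
    refine ContinuousLinearMap.ext fun v => ?_
    simp only [lD, Matrix.cons_val_zero, ContinuousLinearMap.add_apply, Pi.add_apply, Pi.mul_apply,
      ContinuousLinearMap.smul_apply, smul_eq_mul, c0, c1, c2]
    ring
  have H1 : HasFDerivAt (fun x : E3 =>
      x 1 * ((x 1)^2 + 3*θ*(x 1)*(x 2 + x 0) + 3*(1-θ)*((x 2)^2 + (x 0)^2) + 2*(x 2)*(x 0)))
      (lD θ 1) cpt := by
    refine (h1.mul ((((hs1).add ((h1.const_mul (3*θ)).mul (h2.add h0))).add
      ((hs2.add hs0).const_mul (3*(1-θ)))).add ((h2.const_mul 2).mul h0))).congr_fderiv ?_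
    refine ContinuousLinearMap.ext fun v => ?_
    simp only [lD, Matrix.cons_val_one, Matrix.head_cons, ContinuousLinearMap.add_apply, Matrix.cons_val_zero, Pi.add_apply, Pi.mul_apply,
      ContinuousLinearMap.smul_apply, smul_eq_mul, c0, c1, c2]
    ring
  have H2 : HasFDerivAt (fun x : E3 =>
      x 2 * ((x 2)^2 + 3*θ*(x 2)*(x 0 + x 1) + 3*(1-θ)*((x 0)^2 + (x 1)^2) + 2*(x 0)*(x 1)))
      (lD θ 2) cpt := by
    refine (h2.mul ((((hs2).add ((h2.const_mul (3*θ)).mul (h0.add h1))).add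
      ((hs0.add hs1).const_mul (3*(1-θ)))).add ((h0.const_mul 2).mul h1))).congr_fderiv ?_
    refine ContinuousLinearMap.ext fun v => ?_
    simp only [lD, Matrix.cons_val_two, Matrix.tail_cons, Matrix.head_cons, Pi.add_apply, Pi.mul_apply,
      ContinuousLinearMap.add_apply, ContinuousLinearMap.smul_apply, smul_eq_mul, c0, c1, c2]
    ring
  rw [← hasFDerivWithinAt_univ]
  refine (hasFDerivWithinAt_piLp 2).2 fun i => ?_
  have hproj : ∀ i, PiLp.proj 2 (fun _ : Fin 3 => ℝ) i ∘L Ld θ = lD θ i := fun i => rfl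
  rw [hproj]
  fin_cases i
  · exact H0.hasFDerivWithinAt
  · exact H1.hasFDerivWithinAt
  · exact H2.hasFDerivWithinAt

end aux

/-- DV_θ(c) has eigenvalues 3θ/2 and 2 - 3θ/2 on the tangent space of the simplex, with
eigenvectors (1,-1,0) and (1,1,-2). -/
theorem fderiv_at_c_eigenvalues :
    ∀ θ ∈ Set.Icc (0:ℝ) 1,
      fderiv ℝ (Vcso θ) cpt (!₂[1, -1, 0] : EuclideanSpace ℝ (Fin 3)) =
        (3 * θ / 2) • (!₂[1, -1, 0] : EuclideanSpace ℝ (Fin 3)) ∧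
      fderiv ℝ (Vcso θ) cpt (!₂[1, 1, -2] : EuclideanSpace ℝ (Fin 3)) =
        (2 - 3 * θ / 2) • (!₂[1, 1, -2] : EuclideanSpace ℝ (Fin 3)) := by
  intro θ _
  rw [(hVderiv θ).fderiv]
  constructor
  · ext i
    fin_cases i
    · show (3/2 + 3*θ/4) * 1 + (3/2 - 3*θ/4) * (-1) + (3*θ/4 + 1/2) * 0 = 3 * θ / 2 * 1
      ring
    · show (3/2 - 3*θ/4) * 1 + (3/2 + 3*θ/4) * (-1) + (3*θ/4 + 1/2) * 0 = 3 * θ / 2 * (-1)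
      ring
    · show (2 - 3*θ/2) * 0 = 3 * θ / 2 * 0
      ring
  · ext i
    fin_cases i
    · show (3/2 + 3*θ/4) * 1 + (3/2 - 3*θ/4) * 1 + (3*θ/4 + 1/2) * (-2) = (2 - 3 * θ / 2) * 1
      ring
    · show (3/2 - 3*θ/4) * 1 + (3/2 + 3*θ/4) * 1 + (3*θ/4 + 1/2) * (-2) = (2 - 3 * θ / 2) * 1
      ring
    · show (2 - 3*θ/2) * (-2) = (2 - 3 * θ / 2) * (-2)
      ring
end
end
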